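/- arXiv:1306.2800 — 4 statements merged into one kernel-verified Lean document; each statement's English description precedes it below -/
import Mathlib

section
/- Let Ω ⊂ ℝ² be a nonempty open bounded connected set admitting a web viscosity solution of the Dirichlet problem −Δ_∞ u = 1 in Ω, u = 0 on ∂Ω. Then, denoting S := Cut(Ω) (which equals high(Ω)), the set Ω is the open tubular neighborhood Ω = {x ∈ ℝ² : d_S(x) < ρ_Ω}, where d_S(x) := min_{y∈S}|x−y|. -/
open scoped InnerProductSpace
open Metric Set Filter

noncomputable section

abbrev En (n : ℕ) := EuclideanSpace ℝ (Fin n)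

variable {n : ℕ}

/-- Distance from the boundary of `Ω`. -/
noncomputable def dBd (Ω : Set (En n)) (x : En n) : ℝ := Metric.infDist x (frontier Ω)

/-- The inradius `ρ_Ω := max_{closure Ω} d_∂Ω`. -/
noncomputable def rhoΩ (Ω : Set (En n)) : ℝ := sSup (dBd Ω '' closure Ω)

/-- The singular set `Σ(Ω)`: points of `Ω` where `d_∂Ω` is not differentiable. -/
def SingSet (Ω : Set (En n)) : Set (En n) := {x ∈ Ω | ¬ DifferentiableAt ℝ (dBd Ω) x}

/-- The cut locus: the closure of the singular set. -/
def cutLocus (Ω : Set (En n)) : Set (En n) := closure (SingSet Ω)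

/-- The high ridge: points of `closure Ω` where `d_∂Ω` attains its maximum `ρ_Ω`. -/
def highRidge (Ω : Set (En n)) : Set (En n) := {x ∈ closure Ω | dBd Ω x = rhoΩ Ω}

noncomputable def c₀ : ℝ := 3 ^ ((4 : ℝ) / 3) / 4

/-- The candidate web solution `φ_Ω`. -/
noncomputable def phiΩ (Ω : Set (En n)) (x : En n) : ℝ :=
  c₀ * (rhoΩ Ω ^ ((4 : ℝ) / 3) - (rhoΩ Ω - dBd Ω x) ^ ((4 : ℝ) / 3))

/-- The infinity Laplacian `⟨D²φ(x)∇φ(x), ∇φ(x)⟩` of a smooth function. -/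
noncomputable def infLap (φ : En n → ℝ) (x : En n) : ℝ :=
  ⟪(fderiv ℝ (gradient φ) x) (gradient φ x), gradient φ x⟫_ℝ

/-- Viscosity subsolution of `-Δ_∞ u = 1` on an open set `A`. -/
def IsViscSubsol (A : Set (En n)) (u : En n → ℝ) : Prop :=
  ∀ φ : En n → ℝ, ContDiffOn ℝ 2 φ A → ∀ x₀ ∈ A,
    IsLocalMin (φ - u) x₀ → -infLap φ x₀ ≤ 1

/-- Viscosity supersolution of `-Δ_∞ u = 1` on an open set `A`. -/
def IsViscSupersol (A : Set (En n)) (u : En n → ℝ) : Prop :=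
  ∀ φ : En n → ℝ, ContDiffOn ℝ 2 φ A → ∀ x₀ ∈ A,
    IsLocalMax (φ - u) x₀ → 1 ≤ -infLap φ x₀

/-- Viscosity solution of `-Δ_∞ u = 1` on an open set `A`. -/
def IsViscSol (A : Set (En n)) (u : En n → ℝ) : Prop :=
  ContinuousOn u A ∧ IsViscSubsol A u ∧ IsViscSupersol A u

/-- Viscosity solution of the Dirichlet problem `-Δ_∞ u = 1` in `Ω`, `u = 0` on `∂Ω`. -/
def IsDirichletSol (Ω : Set (En n)) (u : En n → ℝ) : Prop :=
  ContinuousOn u (closure Ω) ∧ (∀ x ∈ frontier Ω, u x = 0) ∧ IsViscSol Ω u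

/-- `u` is a web function on `Ω`: it depends only on the distance from the boundary. -/
def IsWebOn (Ω : Set (En n)) (u : En n → ℝ) : Prop :=
  ∃ f : ℝ → ℝ, ContinuousOn f (Set.Icc 0 (rhoΩ Ω)) ∧ ∀ x ∈ closure Ω, u x = f (dBd Ω x)

/-- Fréchet superdifferential of `u` at `x`. -/
def superDiff (u : En n → ℝ) (x : En n) : Set (En n) :=
  {p | ∀ ε > 0, ∀ᶠ y in nhds x, u y - u x - ⟪p, y - x⟫_ℝ ≤ ε * ‖y - x‖}

/-- Set of reachable gradients `D*u(x)`. -/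
def reachGrad (u : En n → ℝ) (x : En n) : Set (En n) :=
  {p | ∃ xs : ℕ → En n, (∀ h, xs h ≠ x) ∧ (∀ h, DifferentiableAt ℝ u (xs h)) ∧
    Filter.Tendsto xs Filter.atTop (nhds x) ∧
    Filter.Tendsto (fun h => gradient u (xs h)) Filter.atTop (nhds p)}

/-- The set of projections of `x` onto a closed set `S`. -/
def projSet (S : Set (En n)) (x : En n) : Set (En n) :=
  {y ∈ S | dist x y = Metric.infDist x S}

end
section TestQ

/-- quadratic test function -/
noncomputable def testQ (x₀ : En 2) (c : ℝ) (Q : En 2) (α β : ℝ) (e : En 2) (y : En 2) : ℝ :=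
  c + ⟪Q, y - x₀⟫_ℝ + α * ⟪y - x₀, y - x₀⟫_ℝ + β * (⟪e, y - x₀⟫_ℝ * ⟪e, y - x₀⟫_ℝ)

noncomputable def testG (x₀ : En 2) (Q : En 2) (α β : ℝ) (e : En 2) (y : En 2) : En 2 :=
  Q + (2*α) • (y - x₀) + (2*β*⟪e, y - x₀⟫_ℝ) • e

lemma testQ_contDiff (x₀ : En 2) (c : ℝ) (Q : En 2) (α β : ℝ) (e : En 2) :
    ContDiff ℝ 2 (testQ x₀ c Q α β e) := by
  have h0 : ContDiff ℝ 2 (fun y : En 2 => y - x₀) := contDiff_id.sub contDiff_const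
  have h1 : ContDiff ℝ 2 (fun y : En 2 => ⟪Q, y - x₀⟫_ℝ) := (contDiff_const).inner ℝ h0
  have h2 : ContDiff ℝ 2 (fun y : En 2 => ⟪y - x₀, y - x₀⟫_ℝ) := h0.inner ℝ h0
  have h3 : ContDiff ℝ 2 (fun y : En 2 => ⟪e, y - x₀⟫_ℝ) := (contDiff_const).inner ℝ h0
  exact ((contDiff_const.add h1).add (contDiff_const.mul h2)).add (contDiff_const.mul (h3.mul h3))

lemma testQ_hasFDerivAt (x₀ : En 2) (c : ℝ) (Q : En 2) (α β : ℝ) (e : En 2) (y : En 2) :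
    HasFDerivAt (testQ x₀ c Q α β e) (innerSL ℝ (testG x₀ Q α β e y)) y := by
  have h0 : HasFDerivAt (fun y : En 2 => y - x₀) (ContinuousLinearMap.id ℝ (En 2)) y :=
    (hasFDerivAt_id y).sub_const x₀
  have h1 := (hasFDerivAt_const Q y).inner ℝ h0
  have h2 := h0.inner ℝ h0
  have h3 := (hasFDerivAt_const e y).inner ℝ h0
  have h := ((hasFDerivAt_const c y).add h1).add
      ((hasFDerivAt_const α y).mul h2) |>.add ((hasFDerivAt_const β y).mul (h3.mul h3))
  refine h.congr_fderiv ?_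
  ext w
  simp [testG, fderivInnerCLM_apply, real_inner_smul_left, inner_add_left,
    real_inner_comm (y - x₀) w]
  try ring_nf
  try rw [real_inner_comm e w]
  try ring
  rw [inner_sub_left]; ring

lemma testQ_gradient (x₀ : En 2) (c : ℝ) (Q : En 2) (α β : ℝ) (e : En 2) :
    gradient (testQ x₀ c Q α β e) = testG x₀ Q α β e := by
  apply gradient_eq
  intro y
  rw [hasGradientAt_iff_hasFDerivAt]
  refine (testQ_hasFDerivAt x₀ c Q α β e y).congr_fderiv ?_
  ext w
  rw [InnerProductSpace.toDual_apply_apply, innerSL_apply_apply]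

noncomputable def testH (α β : ℝ) (e : En 2) : En 2 →L[ℝ] En 2 :=
  (2*α) • (ContinuousLinearMap.id ℝ (En 2)) + (2*β) • ((innerSL ℝ e).smulRight e)

lemma testG_hasFDerivAt (x₀ : En 2) (Q : En 2) (α β : ℝ) (e : En 2) (y : En 2) :
    HasFDerivAt (testG x₀ Q α β e) (testH α β e) y := by
  have h : HasFDerivAt (fun y : En 2 => Q + (testH α β e) (y - x₀)) (testH α β e) y := by
    have := ((testH α β e).hasFDerivAt (x := y - x₀)).comp y ((hasFDerivAt_id y).sub_const x₀)
    simpa using this.const_add Q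
  convert h using 2 with y
  simp [testG, testH, smul_smul]
  module

lemma testQ_infLap (x₀ : En 2) (c : ℝ) (Q : En 2) (α β : ℝ) (e : En 2) :
    infLap (testQ x₀ c Q α β e) x₀ =
      2 * α * ⟪Q, Q⟫_ℝ + 2 * β * (⟪e, Q⟫_ℝ * ⟪e, Q⟫_ℝ) := by
  rw [infLap, testQ_gradient]
  have hG : testG x₀ Q α β e x₀ = Q := by simp [testG]
  rw [(testG_hasFDerivAt x₀ Q α β e x₀).fderiv, hG]
  simp [testH, inner_add_left, real_inner_smul_left]


end TestQ
/-! ### Basic geometry of the distance function -/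

section Geometry

variable {Ω : Set (En 2)}

lemma aux_frontier_ne (hne : Ω.Nonempty) (hop : IsOpen Ω) (hbd : Bornology.IsBounded Ω) :
    (frontier Ω).Nonempty := by
  by_contra h
  rw [Set.not_nonempty_iff_eq_empty, frontier_eq_empty_iff] at h
  rcases h with h | h
  · rcases hne with ⟨x, hx⟩; rw [h] at hx; exact hx
  · rw [h] at hbd
    rcases hbd.subset_closedBall (0 : En 2) with ⟨r, hball⟩
    rcases NormedSpace.exists_lt_norm ℝ (En 2) r with ⟨y, hy⟩
    have := hball (Set.mem_univ y)
    rw [Metric.mem_closedBall, dist_zero_right] at this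
    exact absurd this (not_le.mpr hy)

lemma aux_frontier_compact (hbd : Bornology.IsBounded Ω) : IsCompact (frontier Ω) :=
  (Metric.isCompact_of_isClosed_isBounded isClosed_frontier
    (hbd.closure.subset (frontier_subset_closure)))

lemma aux_closure_compact (hbd : Bornology.IsBounded Ω) : IsCompact (closure Ω) :=
  Metric.isCompact_of_isClosed_isBounded isClosed_closure hbd.closure

lemma aux_d_cont : Continuous (dBd Ω) := Metric.continuous_infDist_pt _

lemma aux_d_lip (x y : En 2) : dBd Ω x ≤ dBd Ω y + dist x y :=
  Metric.infDist_le_infDist_add_dist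

lemma aux_d_frontier {x : En 2} (hx : x ∈ frontier Ω) : dBd Ω x = 0 :=
  Metric.infDist_zero_of_mem hx

lemma aux_d_le_dist {x ξ : En 2} (hξ : ξ ∈ frontier Ω) : dBd Ω x ≤ dist x ξ :=
  Metric.infDist_le_dist_of_mem hξ

lemma aux_d_pos (hne : Ω.Nonempty) (hop : IsOpen Ω) (hbd : Bornology.IsBounded Ω)
    {x : En 2} (hx : x ∈ Ω) : 0 < dBd Ω x := by
  rw [dBd, ← isClosed_frontier.notMem_iff_infDist_pos (aux_frontier_ne hne hop hbd)]
  intro h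
  rw [frontier, hop.interior_eq] at h
  exact h.2 hx

lemma aux_d_nonneg (x : En 2) : 0 ≤ dBd Ω x := Metric.infDist_nonneg

lemma aux_bddAbove (hbd : Bornology.IsBounded Ω) : BddAbove (dBd Ω '' closure Ω) :=
  ((aux_closure_compact hbd).image aux_d_cont).bddAbove

lemma aux_d_le_rho (hbd : Bornology.IsBounded Ω) {x : En 2} (hx : x ∈ closure Ω) :
    dBd Ω x ≤ rhoΩ Ω :=
  le_csSup (aux_bddAbove hbd) ⟨x, hx, rfl⟩

lemma aux_exists_max (hne : Ω.Nonempty) (hbd : Bornology.IsBounded Ω) :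
    ∃ x ∈ closure Ω, dBd Ω x = rhoΩ Ω := by
  have hcne : (closure Ω).Nonempty := hne.closure
  have h := ((aux_closure_compact hbd).image (aux_d_cont (Ω := Ω))).sSup_mem
      (hcne.image (dBd Ω))
  rcases h with ⟨x, hx, hxe⟩
  exact ⟨x, hx, hxe⟩

lemma aux_rho_pos (hne : Ω.Nonempty) (hop : IsOpen Ω) (hbd : Bornology.IsBounded Ω) :
    0 < rhoΩ Ω := by
  rcases hne with ⟨x, hx⟩
  exact lt_of_lt_of_le (aux_d_pos ⟨x, hx⟩ hop hbd hx) (aux_d_le_rho hbd (subset_closure hx))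

lemma aux_mem_of_pos (hop : IsOpen Ω) {x : En 2} (hx : x ∈ closure Ω)
    (hd : 0 < dBd Ω x) : x ∈ Ω := by
  by_contra h
  have hfr : x ∈ frontier Ω := by
    rw [frontier, hop.interior_eq]; exact ⟨hx, h⟩
  rw [aux_d_frontier hfr] at hd
  exact lt_irrefl _ hd

/-- connectedness trick: a preconnected set avoiding the frontier and meeting `Ω` is inside. -/
lemma aux_conn_sub (hop : IsOpen Ω) {K : Set (En 2)} (hK : IsPreconnected K)
    (hdisj : ∀ z ∈ K, z ∉ frontier Ω) (hmeet : (K ∩ Ω).Nonempty) : K ⊆ Ω := by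
  have hcov : K ⊆ Ω ∪ (closure Ω)ᶜ := by
    intro z hz
    by_cases h : z ∈ Ω
    · exact Or.inl h
    · refine Or.inr ?_
      intro hcl
      refine hdisj z hz ?_
      rw [frontier, hop.interior_eq]
      exact ⟨hcl, h⟩
  have hdisj2 : K ∩ (Ω ∩ (closure Ω)ᶜ) = ∅ := by
    ext z; simp only [Set.mem_inter_iff, Set.mem_empty_iff_false, iff_false]
    rintro ⟨_, hz1, hz2⟩
    exact hz2 (subset_closure hz1)
  have := hK.subset_left_of_subset_union hop (isClosed_closure.isOpen_compl) ?_ hcov hmeet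
  · exact this
  · rw [Set.disjoint_iff_inter_eq_empty]
    ext z; simp only [Set.mem_inter_iff, Set.mem_empty_iff_false, iff_false, Set.mem_compl_iff]
    rintro ⟨hz1, hz2⟩
    exact hz2 (subset_closure hz1)

lemma aux_ball_sub (hop : IsOpen Ω) {x : En 2} (hx : x ∈ Ω) :
    Metric.ball x (dBd Ω x) ⊆ Ω := by
  rcases le_or_gt (dBd Ω x) 0 with h0 | h0
  · rw [Metric.ball_eq_empty.mpr h0]
    exact Set.empty_subset _
  apply aux_conn_sub hop (convex_ball x _).isPreconnected
  · intro z hz hzf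
    have := aux_d_le_dist (x := x) hzf
    rw [Metric.mem_ball, dist_comm] at hz
    exact absurd this (not_le.mpr hz)
  · exact ⟨x, Metric.mem_ball_self h0, hx⟩

end Geometry
section Geometry2

variable {Ω : Set (En 2)}

lemma aux_foot (hne : Ω.Nonempty) (hop : IsOpen Ω) (hbd : Bornology.IsBounded Ω) (x : En 2) :
    ∃ ξ ∈ frontier Ω, dist x ξ = dBd Ω x := by
  rcases (aux_frontier_compact hbd).exists_infDist_eq_dist (aux_frontier_ne hne hop hbd) x with
    ⟨ξ, hξ, h⟩
  exact ⟨ξ, hξ, h.symm⟩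

/-- along the segment from `x` to a foot `ξ`, the distance decreases linearly. -/
lemma aux_segment {x ξ : En 2} (hξ : ξ ∈ frontier Ω) (hd : dist x ξ = dBd Ω x)
    {θ : ℝ} (hθ0 : 0 ≤ θ) (hθ1 : θ ≤ 1) :
    dBd Ω (x + θ • (ξ - x)) = (1 - θ) * dBd Ω x := by
  set z := x + θ • (ξ - x) with hz
  have hzd : dist z ξ = (1 - θ) * dBd Ω x := by
    rw [dist_eq_norm]
    have : z - ξ = (1 - θ) • (x - ξ) := by rw [hz]; module
    rw [this, norm_smul, Real.norm_eq_abs, abs_of_nonneg (by linarith)]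
    rw [← dist_eq_norm, hd]
  have hxz : dist x z = θ * dBd Ω x := by
    rw [dist_eq_norm]
    have : x - z = (-θ) • (ξ - x) := by rw [hz]; module
    rw [this, norm_smul, Real.norm_eq_abs, abs_neg, abs_of_nonneg hθ0, ← hd, dist_eq_norm]
    have : ‖ξ - x‖ = ‖x - ξ‖ := norm_sub_rev _ _
    rw [this]
  have h1 : dBd Ω z ≤ (1 - θ) * dBd Ω x := hzd ▸ aux_d_le_dist hξ
  have h2 : dBd Ω x ≤ dBd Ω z + θ * dBd Ω x := hxz ▸ aux_d_lip x z
  linarith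

lemma aux_surj (hne : Ω.Nonempty) (hop : IsOpen Ω) (hbd : Bornology.IsBounded Ω)
    (hconn : IsConnected Ω)
    {t : ℝ} (ht0 : 0 ≤ t) (htρ : t ≤ rhoΩ Ω) : ∃ x ∈ closure Ω, dBd Ω x = t := by
  rcases aux_exists_max hne hbd with ⟨xm, hxmc, hxm⟩
  rcases aux_frontier_ne hne hop hbd with ⟨z, hz⟩
  have hzc : z ∈ closure Ω := frontier_subset_closure hz
  have hpc : IsPreconnected (closure Ω) := hconn.closure.isPreconnected
  have him := hpc.intermediate_value hzc hxmc (aux_d_cont (Ω := Ω)).continuousOn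
  have : t ∈ Set.Icc (dBd Ω z) (dBd Ω xm) := by
    rw [aux_d_frontier hz, hxm]
    exact ⟨ht0, htρ⟩
  rcases him this with ⟨x, hx, hxe⟩
  exact ⟨x, hx, hxe⟩

end Geometry2
section NormQuad

/-- quadratic upper bound for the norm (key semiconcavity estimate). -/
lemma aux_norm_quad {e v : En 2} (he : ‖e‖ = 1) {r : ℝ} (hr : 0 < r)
    (hs : |⟪e, v⟫_ℝ| ≤ r / 2) :
    ‖r • e + v‖ ≤ r + ⟪e, v⟫_ℝ + (1 / r) * (‖v‖ ^ 2 - ⟪e, v⟫_ℝ ^ 2) := by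
  set s := ⟪e, v⟫_ℝ with hsdef
  have hcs : |s| ≤ ‖v‖ := by
    have := abs_real_inner_le_norm e v
    rwa [he, one_mul] at this
  have hv2 : s ^ 2 ≤ ‖v‖ ^ 2 := by
    have := sq_abs s ▸ pow_le_pow_left₀ (abs_nonneg s) hcs 2
    simpa [sq_abs] using this
  have hB : 0 ≤ (1 / r) * (‖v‖ ^ 2 - s ^ 2) :=
    mul_nonneg (by positivity) (by linarith)
  have hsge : -(r / 2) ≤ s := (abs_le.mp hs).1
  have hRHS : 0 < r + s + (1 / r) * (‖v‖ ^ 2 - s ^ 2) := by nlinarith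
  have hLHS2 : ‖r • e + v‖ ^ 2 = r ^ 2 + 2 * r * s + ‖v‖ ^ 2 := by
    rw [norm_add_sq_real, norm_smul, Real.norm_eq_abs, abs_of_pos hr, he, mul_one,
      real_inner_smul_left]
    ring
  set B := (1 / r) * (‖v‖ ^ 2 - s ^ 2) with hBdef
  have hrB : r * B = ‖v‖ ^ 2 - s ^ 2 := by
    rw [hBdef]; field_simp
  have hle : ‖r • e + v‖ ^ 2 ≤ (r + s + B) ^ 2 := by
    rw [hLHS2]
    nlinarith [sq_nonneg B, mul_nonneg hB (by linarith : (0:ℝ) ≤ r + 2 * s)]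
  nlinarith [norm_nonneg (r • e + v)]

end NormQuad

section Deriv

lemma aux_hasDerivAt_line (F : En 2 → ℝ) {x : En 2} (hd : DifferentiableAt ℝ F x) (v : En 2) :
    HasDerivAt (fun s : ℝ => F (x + s • v)) (fderiv ℝ F x v) 0 := by
  have hline : HasDerivAt (fun s : ℝ => x + s • v) v 0 := by
    have h1 : HasDerivAt (fun s : ℝ => s • v) ((1:ℝ) • v) 0 := (hasDerivAt_id 0).smul_const v
    rw [one_smul] at h1
    exact h1.const_add x
  have h0 : x + (0:ℝ) • v = x := by simp
  have hF : HasFDerivAt F (fderiv ℝ F x) (x + (0:ℝ) • v) := by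
    rw [h0]; exact hd.hasFDerivAt
  have := hF.comp_hasDerivAt 0 hline
  exact this

lemma aux_slope_right (F : En 2 → ℝ) {x : En 2} (hd : DifferentiableAt ℝ F x) (v : En 2) :
    Filter.Tendsto (fun s : ℝ => (F (x + s • v) - F x) / s) (nhdsWithin 0 (Set.Ioi 0))
      (nhds (fderiv ℝ F x v)) := by
  have h := (aux_hasDerivAt_line F hd v)
  rw [hasDerivAt_iff_tendsto_slope] at h
  have hmono : nhdsWithin (0:ℝ) (Set.Ioi 0) ≤ nhdsWithin 0 {(0:ℝ)}ᶜ := by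
    apply nhdsWithin_mono
    intro s hs
    exact ne_of_gt hs
  have h2 := h.mono_left hmono
  apply h2.congr
  intro s
  rw [slope_def_field]
  simp

lemma aux_dirbound {F : En 2 → ℝ} {x : En 2} (hd : DifferentiableAt ℝ F x) {v : En 2} {c : ℝ}
    (h : ∀ᶠ s in nhdsWithin (0:ℝ) (Set.Ioi 0), F (x + s • v) - F x ≤ c * s) :
    fderiv ℝ F x v ≤ c := by
  apply le_of_tendsto (aux_slope_right F hd v)
  filter_upwards [h, self_mem_nhdsWithin] with s hs hs0
  rw [Set.mem_Ioi] at hs0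
  exact (div_le_iff₀ hs0).mpr (by linarith [hs])

lemma aux_direq {F : En 2 → ℝ} {x : En 2} (hd : DifferentiableAt ℝ F x) {v : En 2} {c : ℝ}
    (h : ∀ᶠ s in nhdsWithin (0:ℝ) (Set.Ioi 0), F (x + s • v) - F x = c * s) :
    fderiv ℝ F x v = c := by
  have hT := aux_slope_right F hd v
  have hT2 : Filter.Tendsto (fun s : ℝ => (F (x + s • v) - F x) / s)
      (nhdsWithin 0 (Set.Ioi 0)) (nhds c) := by
    have : (fun s : ℝ => (F (x + s • v) - F x) / s) =ᶠ[nhdsWithin (0:ℝ) (Set.Ioi 0)]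
        (fun _ => c) := by
      filter_upwards [h, self_mem_nhdsWithin] with s hs hs0
      rw [Set.mem_Ioi] at hs0
      rw [hs]
      field_simp
    exact Filter.Tendsto.congr' this.symm tendsto_const_nhds
  exact tendsto_nhds_unique hT hT2

/-- the directional derivative of the distance toward a foot point equals `-dBd Ω x`. -/
lemma aux_dirderiv {Ω : Set (En 2)} {x ξ : En 2} (hξ : ξ ∈ frontier Ω)
    (hfoot : dist x ξ = dBd Ω x) (hpos : 0 < dBd Ω x)
    (hd : DifferentiableAt ℝ (dBd Ω) x) :
    fderiv ℝ (dBd Ω) x (ξ - x) = -dBd Ω x := by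
  apply aux_direq hd
  have hmem : Set.Ioo (0:ℝ) 1 ∈ nhdsWithin (0:ℝ) (Set.Ioi 0) := by
    apply mem_nhdsWithin.mpr
    exact ⟨Set.Iio 1, isOpen_Iio, by norm_num, by
      intro s hs
      exact ⟨hs.2, hs.1⟩⟩
  filter_upwards [hmem] with s hs
  rw [aux_segment hξ hfoot (le_of_lt hs.1) (le_of_lt hs.2)]
  ring

end Deriv
set_option maxHeartbeats 1000000
section Foot

variable {Ω : Set (En 2)}

lemma aux_feet_cont (hne : Ω.Nonempty) (hop : IsOpen Ω) (hbd : Bornology.IsBounded Ω)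
    {x ξ : En 2} (hξ : ξ ∈ frontier Ω) (hfoot : dist x ξ = dBd Ω x)
    (huniq : ∀ ζ ∈ frontier Ω, dist x ζ = dBd Ω x → ζ = ξ) :
    ∀ ε > 0, ∃ δ > 0, ∀ y ζ, dist y x < δ → ζ ∈ frontier Ω → dist y ζ = dBd Ω y →
      dist ζ ξ < ε := by
  intro ε hε
  by_contra hcon
  push_neg at hcon
  have hseq : ∀ k : ℕ, ∃ y ζ, dist y x < 1 / (k + 1) ∧ ζ ∈ frontier Ω ∧
      dist y ζ = dBd Ω y ∧ ε ≤ dist ζ ξ := by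
    intro k
    rcases hcon (1 / (k + 1)) (by positivity) with ⟨y, ζ, h1, h2, h3, h4⟩
    exact ⟨y, ζ, h1, h2, h3, h4⟩
  choose y ζ hyx hζf hζd hζε using hseq
  have hy : Filter.Tendsto y Filter.atTop (nhds x) := by
    rw [tendsto_iff_dist_tendsto_zero]
    apply squeeze_zero (fun k => dist_nonneg) (fun k => le_of_lt (hyx k))
    exact tendsto_one_div_add_atTop_nhds_zero_nat
  rcases (aux_frontier_compact hbd).tendsto_subseq hζf with ⟨ζ', hζ'f, φ, hφ, hζφ⟩
  have hyφ : Filter.Tendsto (y ∘ φ) Filter.atTop (nhds x) := hy.comp hφ.tendsto_atTop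
  have hdist : Filter.Tendsto (fun k => dist (y (φ k)) (ζ (φ k))) Filter.atTop
      (nhds (dist x ζ')) := hyφ.dist hζφ
  have hdBd : Filter.Tendsto (fun k => dBd Ω (y (φ k))) Filter.atTop (nhds (dBd Ω x)) :=
    ((aux_d_cont (Ω := Ω)).tendsto x).comp hyφ
  have heq : (fun k => dist (y (φ k)) (ζ (φ k))) = fun k => dBd Ω (y (φ k)) := by
    funext k; exact hζd (φ k)
  rw [heq] at hdist
  have hxζ' : dist x ζ' = dBd Ω x := tendsto_nhds_unique hdist hdBd
  have : ζ' = ξ := huniq ζ' hζ'f hxζ'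
  have hge : ε ≤ dist ζ' ξ := by
    have h2 : Filter.Tendsto (fun k => dist (ζ (φ k)) ξ) Filter.atTop (nhds (dist ζ' ξ)) :=
      hζφ.dist tendsto_const_nhds
    exact le_of_tendsto_of_tendsto tendsto_const_nhds h2
      (Filter.Eventually.of_forall (fun k => hζε (φ k)))
  rw [this, dist_self] at hge
  linarith

lemma aux_diff_of_unique_foot (hne : Ω.Nonempty) (hop : IsOpen Ω) (hbd : Bornology.IsBounded Ω)
    {x : En 2} (hx : x ∈ Ω) {ξ : En 2} (hξ : ξ ∈ frontier Ω) (hfoot : dist x ξ = dBd Ω x)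
    (huniq : ∀ ζ ∈ frontier Ω, dist x ζ = dBd Ω x → ζ = ξ) :
    DifferentiableAt ℝ (dBd Ω) x := by
  set t₀ := dBd Ω x with ht₀
  have hpos : 0 < t₀ := aux_d_pos hne hop hbd hx
  set e := t₀⁻¹ • (x - ξ) with he
  have hxξ : ‖x - ξ‖ = t₀ := by rw [← dist_eq_norm, hfoot]
  have hte : t₀ • e = x - ξ := by
    rw [he, smul_smul, mul_inv_cancel₀ (ne_of_gt hpos), one_smul]
  have hene : ‖e‖ = 1 := by
    rw [he, norm_smul, Real.norm_eq_abs, abs_of_pos (inv_pos.mpr hpos), hxξ,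
      inv_mul_cancel₀ (ne_of_gt hpos)]
  suffices h : HasFDerivAt (dBd Ω) (innerSL ℝ e) x from h.differentiableAt
  rw [hasFDerivAt_iff_isLittleO_nhds_zero]
  rw [Asymptotics.isLittleO_iff]
  intro c hc
  -- feet continuity with threshold
  rcases aux_feet_cont hne hop hbd hξ hfoot huniq (3 * t₀ * c / 16)
      (by positivity) with ⟨δf, hδf, hfeet⟩
  have hδ : ∃ δ > 0, δ ≤ t₀ / 4 ∧ δ ≤ c * t₀ ∧ δ ≤ δf ∧ δ ≤ 3 * t₀ * c / 16 := by
    refine ⟨min (min (t₀ / 4) (c * t₀)) (min δf (3 * t₀ * c / 16)), by positivity, ?_, ?_, ?_, ?_⟩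
    · exact le_trans (min_le_left _ _) (min_le_left _ _)
    · exact le_trans (min_le_left _ _) (min_le_right _ _)
    · exact le_trans (min_le_right _ _) (min_le_left _ _)
    · exact le_trans (min_le_right _ _) (min_le_right _ _)
  rcases hδ with ⟨δ, hδ0, hδ1, hδ2, hδ3, hδ4⟩
  have hball : Metric.ball (0 : En 2) δ ∈ nhds (0 : En 2) := Metric.ball_mem_nhds _ hδ0
  filter_upwards [hball] with h hh
  rw [Metric.mem_ball, dist_zero_right] at hh
  set y := x + h with hy
  have hyx : dist y x = ‖h‖ := by rw [hy, dist_eq_norm]; simp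
  have hh4 : ‖h‖ ≤ t₀ / 4 := le_of_lt (lt_of_lt_of_le hh hδ1)
  -- upper bound
  have hsh : |⟪e, h⟫_ℝ| ≤ ‖h‖ := by
    have := abs_real_inner_le_norm e h
    rwa [hene, one_mul] at this
  have hupper : dBd Ω y - t₀ - ⟪e, h⟫_ℝ ≤ c * ‖h‖ := by
    have h1 : dBd Ω y ≤ ‖t₀ • e + h‖ := by
      rw [hte]
      have : x - ξ + h = y - ξ := by rw [hy]; abel
      rw [this, ← dist_eq_norm]
      exact aux_d_le_dist hξ
    have h2 : ‖t₀ • e + h‖ ≤ t₀ + ⟪e, h⟫_ℝ + (1 / t₀) * (‖h‖ ^ 2 - ⟪e, h⟫_ℝ ^ 2) :=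
      aux_norm_quad hene hpos (le_trans hsh (by linarith))
    have h3 : (1 / t₀) * (‖h‖ ^ 2 - ⟪e, h⟫_ℝ ^ 2) ≤ (1 / t₀) * ‖h‖ ^ 2 := by
      apply mul_le_mul_of_nonneg_left _ (by positivity)
      nlinarith [sq_nonneg (⟪e, h⟫_ℝ)]
    have h4 : (1 / t₀) * ‖h‖ ^ 2 ≤ c * ‖h‖ := by
      rw [pow_two, ← mul_assoc]
      apply mul_le_mul_of_nonneg_right _ (norm_nonneg h)
      rw [div_mul_eq_mul_div, one_mul, div_le_iff₀ hpos]
      calc ‖h‖ ≤ c * t₀ := le_of_lt (lt_of_lt_of_le hh hδ2)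
        _ = c * t₀ := rfl
    linarith
  -- lower bound
  have hlower : -(c * ‖h‖) ≤ dBd Ω y - t₀ - ⟪e, h⟫_ℝ := by
    rcases aux_foot hne hop hbd y with ⟨ζ, hζf, hζd⟩
    have hxy : dist x y = ‖h‖ := by rw [dist_comm, hyx]
    have hlip1 := aux_d_lip (Ω := Ω) x y
    have hlip2 := aux_d_lip (Ω := Ω) y x
    rw [hxy] at hlip1
    rw [dist_comm, hxy] at hlip2
    set dy := dBd Ω y with hdyd
    have hdy : 3 * t₀ / 4 ≤ dy := by linarith
    have hdypos : 0 < dy := by linarith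
    set ey := dy⁻¹ • (y - ζ) with heyd
    have hyζ : ‖y - ζ‖ = dy := by rw [← dist_eq_norm, hζd]
    have htey : dy • ey = y - ζ := by
      rw [heyd, smul_smul, mul_inv_cancel₀ (ne_of_gt hdypos), one_smul]
    have heyn : ‖ey‖ = 1 := by
      rw [heyd, norm_smul, Real.norm_eq_abs, abs_of_pos (inv_pos.mpr hdypos), hyζ,
        inv_mul_cancel₀ (ne_of_gt hdypos)]
    have hsh2 : |⟪ey, -h⟫_ℝ| ≤ ‖h‖ := by
      have := abs_real_inner_le_norm ey (-h)
      rwa [heyn, one_mul, norm_neg] at this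
    have hkey : t₀ ≤ ‖dy • ey + -h‖ := by
      have hid : dy • ey + -h = x - ζ := by rw [htey, hy]; abel
      rw [hid, ← dist_eq_norm]
      exact aux_d_le_dist hζf
    have hN := aux_norm_quad heyn hdypos (le_trans hsh2 (by linarith))
    rw [norm_neg] at hN
    have hiney : ⟪ey, -h⟫_ℝ = -⟪ey, h⟫_ℝ := by rw [inner_neg_right]
    have hB2 : (1 / dy) * (‖h‖ ^ 2 - ⟪ey, -h⟫_ℝ ^ 2) ≤ (4 / (3 * t₀)) * ‖h‖ ^ 2 := by
      have h1 : (1 / dy) * (‖h‖ ^ 2 - ⟪ey, -h⟫_ℝ ^ 2) ≤ (1 / dy) * ‖h‖ ^ 2 := by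
        apply mul_le_mul_of_nonneg_left _ (by positivity)
        nlinarith [sq_nonneg (⟪ey, -h⟫_ℝ)]
      have h2 : (1 / dy) ≤ 4 / (3 * t₀) := by
        rw [div_le_div_iff₀ hdypos (by positivity)]
        linarith
      have h3 : (1 / dy) * ‖h‖ ^ 2 ≤ (4 / (3 * t₀)) * ‖h‖ ^ 2 :=
        mul_le_mul_of_nonneg_right h2 (by positivity)
      linarith
    -- so : t₀ ≤ dy - ⟪ey, h⟫ + (4/(3 t₀)) ‖h‖²
    have hmain : t₀ ≤ dy - ⟪ey, h⟫_ℝ + (4 / (3 * t₀)) * ‖h‖ ^ 2 := by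
      have := le_trans hkey hN
      rw [hiney] at this hB2
      linarith
    -- bound ‖ey - e‖
    have hfc : dist ζ ξ < 3 * t₀ * c / 16 :=
      hfeet y ζ (by rw [hyx]; exact lt_of_lt_of_le hh hδ3) hζf hζd
    have heye : ‖ey - e‖ ≤ 3 * c / 4 := by
      have hid : ey - e = dy⁻¹ • (h + (ξ - ζ)) + ((dy⁻¹ - t₀⁻¹) • (x - ξ)) := by
        rw [heyd, he, hy]
        have h1 : dy⁻¹ • (x + h - ζ) - t₀⁻¹ • (x - ξ)
            = dy⁻¹ • (h + (ξ - ζ)) + (dy⁻¹ - t₀⁻¹) • (x - ξ) := by module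
        exact h1
      rw [hid]
      have h1 : ‖dy⁻¹ • (h + (ξ - ζ))‖ ≤ dy⁻¹ * (‖h‖ + dist ζ ξ) := by
        rw [norm_smul, Real.norm_eq_abs, abs_of_pos (inv_pos.mpr hdypos)]
        apply mul_le_mul_of_nonneg_left _ (by positivity)
        calc ‖h + (ξ - ζ)‖ ≤ ‖h‖ + ‖ξ - ζ‖ := norm_add_le _ _
          _ = ‖h‖ + dist ζ ξ := by rw [← dist_eq_norm, dist_comm]
      have h2 : ‖(dy⁻¹ - t₀⁻¹) • (x - ξ)‖ ≤ (4 / (3 * t₀)) * ‖h‖ := by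
        rw [norm_smul, Real.norm_eq_abs, hxξ]
        have hab : |dy⁻¹ - t₀⁻¹| = |t₀ - dy| / (dy * t₀) := by
          have h9 : dy⁻¹ - t₀⁻¹ = (t₀ - dy) / (dy * t₀) := by
            field_simp
          rw [h9, abs_div, abs_of_pos (by positivity : (0:ℝ) < dy * t₀)]
        have habs : |t₀ - dy| ≤ ‖h‖ := by
          rw [abs_le]; constructor <;> linarith
        rw [hab]
        rw [div_mul_eq_mul_div, div_le_iff₀ (by positivity : (0:ℝ) < dy * t₀)]
        have : 4 / (3 * t₀) * ‖h‖ * (dy * t₀) = (4 / 3 * dy) * ‖h‖ := by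
          field_simp
        rw [this]
        have h4 : t₀ ≤ 4 / 3 * dy := by linarith
        calc |t₀ - dy| * t₀ ≤ ‖h‖ * t₀ := mul_le_mul_of_nonneg_right habs (le_of_lt hpos)
          _ ≤ ‖h‖ * (4 / 3 * dy) := mul_le_mul_of_nonneg_left (by linarith) (norm_nonneg h)
          _ = 4 / 3 * dy * ‖h‖ := by ring
      have h3 : dy⁻¹ * (‖h‖ + dist ζ ξ) ≤ (4 / (3 * t₀)) * (‖h‖ + 3 * t₀ * c / 16) := by
        have hd1 : dy⁻¹ ≤ 4 / (3 * t₀) := by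
          rw [inv_eq_one_div, div_le_div_iff₀ hdypos (by positivity)]
          linarith
        apply mul_le_mul hd1 (by linarith) (by positivity) (by positivity)
      have hh16 : ‖h‖ ≤ 3 * t₀ * c / 16 := le_of_lt (lt_of_lt_of_le hh hδ4)
      have hexp : (4 / (3 * t₀)) * (‖h‖ + 3 * t₀ * c / 16) + (4 / (3 * t₀)) * ‖h‖
          ≤ 3 * c / 4 := by
        have : (4 / (3 * t₀)) * (3 * t₀ * c / 16) = c / 4 := by field_simp; ring
        have h5 : (4 / (3 * t₀)) * ‖h‖ ≤ c / 4 := by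
          calc (4 / (3 * t₀)) * ‖h‖ ≤ (4 / (3 * t₀)) * (3 * t₀ * c / 16) :=
              mul_le_mul_of_nonneg_left hh16 (by positivity)
            _ = c / 4 := this
        have h6 : (4 / (3 * t₀)) * (‖h‖ + 3 * t₀ * c / 16)
            = (4 / (3 * t₀)) * ‖h‖ + c / 4 := by
          rw [mul_add, this]
        linarith
      calc ‖dy⁻¹ • (h + (ξ - ζ)) + (dy⁻¹ - t₀⁻¹) • (x - ξ)‖
          ≤ ‖dy⁻¹ • (h + (ξ - ζ))‖ + ‖(dy⁻¹ - t₀⁻¹) • (x - ξ)‖ := norm_add_le _ _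
        _ ≤ dy⁻¹ * (‖h‖ + dist ζ ξ) + (4 / (3 * t₀)) * ‖h‖ := by linarith
        _ ≤ (4 / (3 * t₀)) * (‖h‖ + 3 * t₀ * c / 16) + (4 / (3 * t₀)) * ‖h‖ := by linarith
        _ ≤ 3 * c / 4 := hexp
    -- combine
    have hip : ⟪e, h⟫_ℝ - ‖ey - e‖ * ‖h‖ ≤ ⟪ey, h⟫_ℝ := by
      have hsplit : ⟪ey, h⟫_ℝ = ⟪e, h⟫_ℝ + ⟪ey - e, h⟫_ℝ := by
        rw [inner_sub_left]; ring
      have := abs_real_inner_le_norm (ey - e) h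
      have h2 : -(‖ey - e‖ * ‖h‖) ≤ ⟪ey - e, h⟫_ℝ := (abs_le.mp this).1
      linarith
    have hq : (4 / (3 * t₀)) * ‖h‖ ^ 2 ≤ (c / 4) * ‖h‖ := by
      rw [pow_two, ← mul_assoc]
      apply mul_le_mul_of_nonneg_right _ (norm_nonneg h)
      have hh16 : ‖h‖ ≤ 3 * t₀ * c / 16 := le_of_lt (lt_of_lt_of_le hh hδ4)
      calc (4 / (3 * t₀)) * ‖h‖ ≤ (4 / (3 * t₀)) * (3 * t₀ * c / 16) :=
          mul_le_mul_of_nonneg_left hh16 (by positivity)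
        _ = c / 4 := by field_simp; ring
    have hprod : ‖ey - e‖ * ‖h‖ ≤ (3 * c / 4) * ‖h‖ :=
      mul_le_mul_of_nonneg_right heye (norm_nonneg h)
    nlinarith [hmain, hip, hq, hprod]
  have hgoal : dBd Ω (x + h) - dBd Ω x - (innerSL ℝ e) h = dBd Ω y - t₀ - ⟪e, h⟫_ℝ := by
    rw [hy, ht₀]; rfl
  rw [hgoal, Real.norm_eq_abs, abs_le]
  exact ⟨by linarith, by linarith⟩

end Foot
section PDE0

variable {Ω : Set (En 2)} {u : En 2 → ℝ}

lemma aux_no_local_min (hsup : IsViscSupersol Ω u) {x : En 2} (hx : x ∈ Ω)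
    (hmin : IsLocalMin u x) : False := by
  set φ := testQ x (u x) 0 0 0 0 with hφ
  have hφc : ∀ y, φ y = u x := by
    intro y; simp [hφ, testQ]
  have hmax : IsLocalMax (φ - u) x := by
    filter_upwards [hmin] with y hy
    simp only [Pi.sub_apply, hφc]
    linarith
  have h := hsup φ ((testQ_contDiff x (u x) 0 0 0 0).contDiffOn) x hx hmax
  rw [testQ_infLap] at h
  simp at h
  linarith

end PDE0
section Mono

variable {Ω : Set (En 2)} {u : En 2 → ℝ} {f : ℝ → ℝ}

/-- a minimizer of `f` on `[a, ρ]` located above `a` yields a local min of `u`, contradiction. -/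
lemma aux_min_above (hne : Ω.Nonempty) (hop : IsOpen Ω) (hbd : Bornology.IsBounded Ω)
    (hconn : IsConnected Ω) (hsup : IsViscSupersol Ω u)
    (hwu : ∀ x ∈ closure Ω, u x = f (dBd Ω x))
    {a t : ℝ} (ha : 0 ≤ a) (hta : a < t) (htρ : t ≤ rhoΩ Ω)
    (hmin : ∀ s, a ≤ s → s ≤ rhoΩ Ω → f t ≤ f s) : False := by
  rcases aux_surj hne hop hbd hconn (le_trans ha (le_of_lt hta)) htρ with ⟨x, hxc, hxd⟩
  have hxΩ : x ∈ Ω := aux_mem_of_pos hop hxc (by rw [hxd]; linarith)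
  apply aux_no_local_min hsup hxΩ
  have hN : (Metric.ball x (dBd Ω x) ∩ {y | a < dBd Ω y}) ∈ nhds x := by
    apply IsOpen.mem_nhds
    · exact (Metric.isOpen_ball).inter (isOpen_lt continuous_const aux_d_cont)
    · constructor
      · exact Metric.mem_ball_self (by rw [hxd]; linarith)
      · simp only [Set.mem_setOf_eq, hxd]; linarith
  filter_upwards [hN] with y hy
  have hyΩ : y ∈ Ω := aux_ball_sub hop hxΩ hy.1
  have hyρ : dBd Ω y ≤ rhoΩ Ω := aux_d_le_rho hbd (subset_closure hyΩ)
  have hya : a < dBd Ω y := hy.2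
  rw [hwu x (subset_closure hxΩ), hwu y (subset_closure hyΩ), hxd]
  exact hmin _ (le_of_lt hya) hyρ

lemma aux_f_mono (hne : Ω.Nonempty) (hop : IsOpen Ω) (hbd : Bornology.IsBounded Ω)
    (hconn : IsConnected Ω) (hsup : IsViscSupersol Ω u)
    (hwf : ContinuousOn f (Set.Icc 0 (rhoΩ Ω)))
    (hwu : ∀ x ∈ closure Ω, u x = f (dBd Ω x))
    {a b : ℝ} (ha : 0 ≤ a) (hab : a < b) (hbρ : b ≤ rhoΩ Ω) : f a < f b := by
  have haρ : a ≤ rhoΩ Ω := le_trans (le_of_lt hab) hbρ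
  have hsub : Set.Icc a (rhoΩ Ω) ⊆ Set.Icc 0 (rhoΩ Ω) := by
    intro s hs; exact ⟨le_trans ha hs.1, hs.2⟩
  rcases isCompact_Icc.exists_isMinOn (Set.nonempty_Icc.mpr haρ) (hwf.mono hsub)
    with ⟨tm, htm, htmmin⟩
  have htma : tm = a := by
    by_contra hcon
    have htma' : a < tm := lt_of_le_of_ne htm.1 (Ne.symm hcon)
    exact aux_min_above hne hop hbd hconn hsup hwu ha htma' htm.2
      (fun s hs1 hs2 => htmmin ⟨hs1, hs2⟩)
  by_contra hcon
  push_neg at hcon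
  -- then b is a minimizer of f on [a, ρ] with b > a
  apply aux_min_above hne hop hbd hconn hsup hwu ha hab hbρ
  intro s hs1 hs2
  have := htmmin (⟨hs1, hs2⟩ : s ∈ Set.Icc a (rhoΩ Ω))
  rw [htma] at this
  exact le_trans hcon this

end Mono
section ConcTest

variable {Ω : Set (En 2)} {u : En 2 → ℝ} {f : ℝ → ℝ}

lemma aux_f_le (hne : Ω.Nonempty) (hop : IsOpen Ω) (hbd : Bornology.IsBounded Ω)
    (hconn : IsConnected Ω) (hsup : IsViscSupersol Ω u)
    (hwf : ContinuousOn f (Set.Icc 0 (rhoΩ Ω)))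
    (hwu : ∀ x ∈ closure Ω, u x = f (dBd Ω x))
    {a b : ℝ} (ha : 0 ≤ a) (hab : a ≤ b) (hbρ : b ≤ rhoΩ Ω) : f a ≤ f b := by
  rcases eq_or_lt_of_le hab with h | h
  · rw [h]
  · exact le_of_lt (aux_f_mono hne hop hbd hconn hsup hwf hwu ha h hbρ)

/-- there is no lower linear support with positive slope at an interior point (concavity). -/
lemma aux_concave_test (hne : Ω.Nonempty) (hop : IsOpen Ω) (hbd : Bornology.IsBounded Ω)
    (hconn : IsConnected Ω) (hsup : IsViscSupersol Ω u)
    (hwf : ContinuousOn f (Set.Icc 0 (rhoΩ Ω)))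
    (hwu : ∀ x ∈ closure Ω, u x = f (dBd Ω x))
    {t p δ : ℝ} (ht : 0 < t) (htρ : t < rhoΩ Ω) (hp : 0 < p) (hδ : 0 < δ)
    (hjet : ∀ s, |s - t| < δ → 0 ≤ s → s ≤ rhoΩ Ω → f t + p * (s - t) ≤ f s) : False := by
  set ρ := rhoΩ Ω with hρdef
  have hρ : 0 < ρ := aux_rho_pos hne hop hbd
  rcases aux_exists_max hne hbd with ⟨xm, hxmc, hxmd⟩
  have hxmΩ : xm ∈ Ω := aux_mem_of_pos hop hxmc (by rw [hxmd]; exact hρ)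
  rcases aux_foot hne hop hbd xm with ⟨yf, hyff, hyfd⟩
  rw [hxmd] at hyfd
  set r₀ := ρ - t with hr₀def
  have hr₀ : 0 < r₀ := by rw [hr₀def]; linarith
  set θ := r₀ / ρ with hθdef
  have hθ0 : 0 ≤ θ := by positivity
  have hθ1 : θ ≤ 1 := by rw [hθdef, div_le_one hρ]; rw [hr₀def]; linarith
  set x₀ := xm + θ • (yf - xm) with hx₀def
  have hx₀d : dBd Ω x₀ = t := by
    rw [hx₀def, aux_segment hyff (by rw [hyfd, hxmd]) hθ0 hθ1, hxmd, hθdef, hr₀def]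
    field_simp
    rw [← hρdef]; ring
  have hyfn : ‖yf - xm‖ = ρ := by rw [← dist_eq_norm, dist_comm, hyfd]
  have hdist : dist x₀ xm = r₀ := by
    rw [hx₀def, dist_eq_norm]
    have h1 : xm + θ • (yf - xm) - xm = θ • (yf - xm) := by abel
    rw [h1, norm_smul, Real.norm_eq_abs, abs_of_nonneg hθ0, hyfn, hθdef]
    field_simp
  have hx₀Ω : x₀ ∈ Ω := by
    apply aux_ball_sub hop hxmΩ
    rw [Metric.mem_ball, hxmd, hdist, hr₀def]
    linarith
  set e := ρ⁻¹ • (yf - xm) with hedef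
  have hen : ‖e‖ = 1 := by
    rw [hedef, norm_smul, Real.norm_eq_abs, abs_of_pos (inv_pos.mpr hρ), hyfn,
      inv_mul_cancel₀ (ne_of_gt hρ)]
  have hre : r₀ • e = x₀ - xm := by
    rw [hedef, hx₀def, smul_smul, hθdef]
    have : r₀ * ρ⁻¹ = θ := by rw [hθdef]; field_simp
    rw [this]
    abel
  -- main estimate, for arbitrary ε > 0
  have hcontra : ∀ ε : ℝ, 0 < ε → 1 ≤ ε * p ^ 2 := by
    intro ε hε
    set ψ := testQ x₀ (f t) (-(p • e)) (-(p / r₀) - ε / 2) (p / r₀) e with hψdef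
    have hψ0 : ψ x₀ = f t := by simp [hψdef, testQ]
    have hux₀ : u x₀ = f t := by rw [hwu x₀ (subset_closure hx₀Ω), hx₀d]
    have hmax : IsLocalMax (ψ - u) x₀ := by
      have hrr : ∃ rr > 0, rr ≤ r₀ / 2 ∧ rr ≤ t ∧ rr ≤ δ := by
        refine ⟨min (r₀ / 2) (min t δ), by positivity, min_le_left _ _, ?_, ?_⟩
        · exact le_trans (min_le_right _ _) (min_le_left _ _)
        · exact le_trans (min_le_right _ _) (min_le_right _ _)
      rcases hrr with ⟨rr, hrr0, hrr1, hrr2, hrr3⟩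
      have hball : Metric.ball x₀ rr ∈ nhds x₀ := Metric.ball_mem_nhds _ hrr0
      filter_upwards [hball] with y hyball
      rw [Metric.mem_ball, dist_eq_norm] at hyball
      set v := y - x₀ with hvdef
      have hvn : ‖v‖ < rr := hyball
      have hse : |⟪e, v⟫_ℝ| ≤ ‖v‖ := by
        have := abs_real_inner_le_norm e v
        rwa [hen, one_mul] at this
      -- y ∈ Ω
      have hyxm : dist y xm < ρ := by
        calc dist y xm ≤ dist y x₀ + dist x₀ xm := dist_triangle _ _ _
          _ = ‖v‖ + r₀ := by rw [hdist, dist_eq_norm, hvdef]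
          _ < rr + r₀ := by linarith
          _ ≤ ρ := by rw [hr₀def]; linarith
      have hyΩ : y ∈ Ω := by
        apply aux_ball_sub hop hxmΩ
        rw [Metric.mem_ball, hxmd]
        exact hyxm
      obtain ⟨sarg, hsargdef⟩ : ∃ s : ℝ, s = ρ - dist y xm := ⟨_, rfl⟩
      have hsarg0 : 0 < sarg := by rw [hsargdef]; linarith
      have hsargρ : sarg ≤ ρ := by
        rw [hsargdef]
        have := dist_nonneg (x := y) (y := xm)
        linarith
      
      have hr0eq : r₀ = ρ - t := hr₀def
      have h2' : dist y xm ≤ r₀ + ‖v‖ := by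
        calc dist y xm ≤ dist y x₀ + dist x₀ xm := dist_triangle _ _ _
          _ = ‖v‖ + r₀ := by rw [hdist, dist_eq_norm, hvdef]
          _ = r₀ + ‖v‖ := by ring
      have h3' : r₀ - ‖v‖ ≤ dist y xm := by
        have := dist_triangle x₀ y xm
        rw [dist_comm x₀ y, dist_eq_norm y x₀, ← hvdef] at this
        rw [hdist] at this
        linarith
      have hsargδ : |sarg - t| < δ := by
        rw [hsargdef, abs_lt]
        have hvδ : ‖v‖ < δ := lt_of_lt_of_le hvn hrr3
        constructor <;> [linarith; linarith]
      -- d y bounds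
      have hdylb : sarg ≤ dBd Ω y := by
        have := aux_d_lip (Ω := Ω) xm y
        rw [hxmd, dist_comm] at this
        rw [hsargdef]
        linarith
      have hdyρ : dBd Ω y ≤ ρ := aux_d_le_rho hbd (subset_closure hyΩ)
      -- chain
      have hchain1 : f sarg ≤ f (dBd Ω y) :=
        aux_f_le hne hop hbd hconn hsup hwf hwu (le_of_lt hsarg0) hdylb hdyρ
      have hchain2 : f t + p * (sarg - t) ≤ f sarg :=
        hjet sarg hsargδ (le_of_lt hsarg0) hsargρ
      -- sarg - t ≥ δ̃(v)
      have hN : ‖r₀ • e + v‖ ≤ r₀ + ⟪e, v⟫_ℝ + (1 / r₀) * (‖v‖ ^ 2 - ⟪e, v⟫_ℝ ^ 2) :=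
        aux_norm_quad hen hr₀ (by
          calc |⟪e, v⟫_ℝ| ≤ ‖v‖ := hse
            _ ≤ r₀ / 2 := le_trans (le_of_lt hvn) hrr1)
      have hyxm2 : dist y xm = ‖r₀ • e + v‖ := by
        rw [hre, dist_eq_norm]
        congr 1
        rw [hvdef]; abel
      have hdelta : -⟪e, v⟫_ℝ - (1 / r₀) * (‖v‖ ^ 2 - ⟪e, v⟫_ℝ ^ 2) ≤ sarg - t := by
        rw [hsargdef, hyxm2]
        have hr0eq2 : r₀ = ρ - t := hr₀def
        linarith
      have hψy : ψ y ≤ f t + p * (sarg - t) - (ε / 2) * ‖v‖ ^ 2 := by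
        have hψval : ψ y = f t + p * (-⟪e, v⟫_ℝ - (1 / r₀) * (‖v‖ ^ 2 - ⟪e, v⟫_ℝ ^ 2))
            - (ε / 2) * ‖v‖ ^ 2 := by
          simp only [hψdef, testQ, ← hvdef]
          rw [real_inner_self_eq_norm_sq]
          rw [inner_neg_left, real_inner_smul_left]
          field_simp
          ring
        rw [hψval]
        have := mul_le_mul_of_nonneg_left hdelta (le_of_lt hp)
        linarith
      have huy : u y = f (dBd Ω y) := hwu y (subset_closure hyΩ)
      simp only [Pi.sub_apply]
      rw [hψ0, hux₀, huy]
      have hε2 : 0 ≤ (ε / 2) * ‖v‖ ^ 2 := by positivity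
      linarith
    have hsupappl := hsup ψ ((testQ_contDiff _ _ _ _ _ _).contDiffOn) x₀ hx₀Ω hmax
    rw [testQ_infLap] at hsupappl
    have hQQ : ⟪-(p • e), -(p • e)⟫_ℝ = p ^ 2 := by
      rw [inner_neg_neg, real_inner_smul_left, real_inner_smul_right,
        real_inner_self_eq_norm_sq, hen]
      ring
    have heQ : ⟪e, -(p • e)⟫_ℝ = -p := by
      rw [inner_neg_right, real_inner_smul_right, real_inner_self_eq_norm_sq, hen]
      ring
    rw [hQQ, heQ] at hsupappl
    have : -(2 * (-(p / r₀) - ε / 2) * p ^ 2 + 2 * (p / r₀) * (-p * -p)) = ε * p ^ 2 := by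
      ring
    rw [this] at hsupappl
    exact hsupappl
  have h1 := hcontra (1 / (2 * p ^ 2)) (by positivity)
  have h2 : (1 / (2 * p ^ 2)) * p ^ 2 = 1 / 2 := by
    field_simp
  rw [h2] at h1
  linarith

end ConcTest
section Chord

variable {Ω : Set (En 2)} {u : En 2 → ℝ} {f : ℝ → ℝ}

lemma aux_f_chord (hne : Ω.Nonempty) (hop : IsOpen Ω) (hbd : Bornology.IsBounded Ω)
    (hconn : IsConnected Ω) (hsup : IsViscSupersol Ω u)
    (hwf : ContinuousOn f (Set.Icc 0 (rhoΩ Ω)))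
    (hwu : ∀ x ∈ closure Ω, u x = f (dBd Ω x))
    {t1 t0 t2 : ℝ} (h1 : 0 ≤ t1) (h10 : t1 < t0) (h02 : t0 < t2) (h2 : t2 ≤ rhoΩ Ω) :
    (t0 - t1) * (f t2 - f t0) ≤ (t2 - t0) * (f t0 - f t1) := by
  by_contra hcon
  push_neg at hcon
  have h12 : t1 < t2 := lt_trans h10 h02
  have hf12 : f t1 < f t2 := aux_f_mono hne hop hbd hconn hsup hwf hwu h1 h12 h2
  set p := (f t2 - f t1) / (t2 - t1) with hpdef
  have hp : 0 < p := by
    rw [hpdef]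
    apply div_pos (by linarith) (by linarith)
  have hpmul : p * (t2 - t1) = f t2 - f t1 := by
    rw [hpdef]; exact div_mul_cancel₀ _ (by linarith)
  -- the affine function ℓ s = f t1 + p (s - t1)
  have hval : f t0 < f t1 + p * (t0 - t1) := by
    have hmulid : (t2 - t1) * (p * (t0 - t1)) = (t0 - t1) * (f t2 - f t1) := by
      calc (t2 - t1) * (p * (t0 - t1)) = (p * (t2 - t1)) * (t0 - t1) := by ring
        _ = (f t2 - f t1) * (t0 - t1) := by rw [hpmul]
        _ = (t0 - t1) * (f t2 - f t1) := by ring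
    have hkey : (t2 - t1) * (f t0 - f t1 - p * (t0 - t1))
        = (t2 - t0) * (f t0 - f t1) - (t0 - t1) * (f t2 - f t0) := by
      have hexp : (t2 - t1) * (f t0 - f t1 - p * (t0 - t1))
          = (t2 - t1) * (f t0 - f t1) - (t2 - t1) * (p * (t0 - t1)) := by ring
      rw [hexp, hmulid]
      ring
    have hg : (t2 - t1) * (f t0 - f t1 - p * (t0 - t1)) < 0 := by
      rw [hkey]; linarith
    by_contra hcon2
    push_neg at hcon2
    have hge : 0 ≤ f t0 - f t1 - p * (t0 - t1) := by linarith
    nlinarith [mul_nonneg (by linarith : (0:ℝ) ≤ t2 - t1) hge]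
  -- minimize g = f - ℓ on [t1, t2]
  have hsub : Set.Icc t1 t2 ⊆ Set.Icc 0 (rhoΩ Ω) := fun s hs =>
    ⟨le_trans h1 hs.1, le_trans hs.2 h2⟩
  have hgc : ContinuousOn (fun s => f s - (f t1 + p * (s - t1))) (Set.Icc t1 t2) :=
    (hwf.mono hsub).sub (by fun_prop)
  rcases isCompact_Icc.exists_isMinOn (Set.nonempty_Icc.mpr (le_of_lt h12)) hgc
    with ⟨ts, hts, htsmin⟩
  have hgts : f ts - (f t1 + p * (ts - t1)) ≤ f t0 - (f t1 + p * (t0 - t1)) :=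
    htsmin ⟨le_of_lt h10, le_of_lt h02⟩
  have hgneg : f ts - (f t1 + p * (ts - t1)) < 0 := by linarith
  have hts1 : t1 < ts := by
    rcases lt_or_eq_of_le hts.1 with h | h
    · exact h
    · exfalso
      have : f ts - (f t1 + p * (ts - t1)) = 0 := by rw [← h]; ring_nf
      linarith
  have hts2 : ts < t2 := by
    rcases lt_or_eq_of_le hts.2 with h | h
    · exact h
    · exfalso
      rw [h] at hgneg
      have : f t2 - (f t1 + p * (t2 - t1)) = 0 := by rw [hpmul]; ring
      linarith
  apply aux_concave_test hne hop hbd hconn hsup hwf hwu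
    (lt_of_le_of_lt h1 hts1) (lt_of_lt_of_le hts2 h2) hp
    (lt_min (by linarith : (0:ℝ) < ts - t1) (by linarith : (0:ℝ) < t2 - ts))
  intro s hsδ hs0 hsρ
  have habs := abs_lt.mp hsδ
  have hmle1 : min (ts - t1) (t2 - ts) ≤ ts - t1 := min_le_left _ _
  have hmle2 : min (ts - t1) (t2 - ts) ≤ t2 - ts := min_le_right _ _
  have hs1 : t1 < s := by linarith [habs.1]
  have hs2 : s < t2 := by linarith [habs.2]
  have hgs : f ts - (f t1 + p * (ts - t1)) ≤ f s - (f t1 + p * (s - t1)) :=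
    htsmin ⟨le_of_lt hs1, le_of_lt hs2⟩
  linarith

lemma aux_linear_bound (hne : Ω.Nonempty) (hop : IsOpen Ω) (hbd : Bornology.IsBounded Ω)
    (hconn : IsConnected Ω) (hsup : IsViscSupersol Ω u)
    (hwf : ContinuousOn f (Set.Icc 0 (rhoΩ Ω)))
    (hwu : ∀ x ∈ closure Ω, u x = f (dBd Ω x))
    {t0 : ℝ} (h0 : 0 < t0) (h0ρ : t0 < rhoΩ Ω) :
    ∃ a : ℝ, 0 < a ∧ ∀ s, 0 ≤ s → s ≤ rhoΩ Ω → f s ≤ f t0 + a * (s - t0) := by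
  set ρ := rhoΩ Ω with hρdef
  set S := {q : ℝ | ∃ s, t0 < s ∧ s ≤ ρ ∧ q = (f s - f t0) / (s - t0)} with hSdef
  have hSne : S.Nonempty := ⟨(f ρ - f t0) / (ρ - t0), ρ, h0ρ, le_refl _, rfl⟩
  have hSbdd : BddAbove S := by
    refine ⟨(f t0 - f 0) / t0, ?_⟩
    rintro q ⟨s, hs1, hs2, rfl⟩
    have hch := aux_f_chord hne hop hbd hconn hsup hwf hwu (le_refl (0:ℝ)) h0 hs1 hs2
    rw [div_le_div_iff₀ (by linarith) h0]
    nlinarith [hch]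
  set a := sSup S with hadef
  have haq : (f ρ - f t0) / (ρ - t0) ≤ a := le_csSup hSbdd ⟨ρ, h0ρ, le_refl _, rfl⟩
  have ha : 0 < a := by
    have hfm : f t0 < f ρ := aux_f_mono hne hop hbd hconn hsup hwf hwu
      (le_of_lt h0) h0ρ (le_refl _)
    have : (0:ℝ) < (f ρ - f t0) / (ρ - t0) := div_pos (by linarith) (by linarith)
    linarith
  refine ⟨a, ha, ?_⟩
  intro s hs0 hsρ
  rcases lt_trichotomy s t0 with h | h | h
  · -- s < t0 : use csSup_le
    have hle : a ≤ (f t0 - f s) / (t0 - s) := by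
      apply csSup_le hSne
      rintro q ⟨s', hs'1, hs'2, rfl⟩
      have hch := aux_f_chord hne hop hbd hconn hsup hwf hwu hs0 h hs'1 hs'2
      rw [div_le_div_iff₀ (by linarith) (by linarith)]
      nlinarith [hch]
    have h2 : a * (t0 - s) ≤ f t0 - f s := by
      rw [le_div_iff₀ (by linarith : (0:ℝ) < t0 - s)] at hle
      linarith
    linarith [h2]
  · rw [h]; simp
  · have hq : (f s - f t0) / (s - t0) ≤ a := le_csSup hSbdd ⟨s, h, hsρ, rfl⟩
    rw [div_le_iff₀ (by linarith : (0:ℝ) < s - t0)] at hq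
    linarith [hq]

end Chord
section Kink

variable {Ω : Set (En 2)} {u : En 2 → ℝ}

lemma aux_kink_core (hsub : IsViscSubsol Ω u) {x₀ : En 2} (hx₀ : x₀ ∈ Ω)
    {q₁ q₂ : En 2} (hq : q₁ ≠ q₂) {C : ℝ} (hC : 0 ≤ C)
    (hbound : ∀ᶠ y in nhds x₀,
      u y ≤ u x₀ + min ⟪q₁, y - x₀⟫_ℝ ⟪q₂, y - x₀⟫_ℝ + C * ‖y - x₀‖ ^ 2)
    {lam : ℝ} (hlam1 : 1 / 4 ≤ lam) (hlam2 : lam ≤ 3 / 4)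
    (hτ : ⟪lam • q₁ + (1 - lam) • q₂, lam • q₁ + (1 - lam) • q₂⟫_ℝ ≠ 0 ∨ True)
    (hτ2 : ⟪(‖q₁ - q₂‖)⁻¹ • (q₁ - q₂), lam • q₁ + (1 - lam) • q₂⟫_ℝ ≠ 0) : False := by
  set δq := ‖q₁ - q₂‖ with hδqdef
  have hδq : 0 < δq := by
    rw [hδqdef, norm_pos_iff]
    exact sub_ne_zero.mpr hq
  set e₁ := δq⁻¹ • (q₁ - q₂) with he₁def
  have he₁n : ‖e₁‖ = 1 := by
    rw [he₁def, norm_smul, Real.norm_eq_abs, abs_of_pos (inv_pos.mpr hδq), ← hδqdef,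
      inv_mul_cancel₀ (ne_of_gt hδq)]
  have hq12 : q₁ - q₂ = δq • e₁ := by
    rw [he₁def, smul_smul, mul_inv_cancel₀ (ne_of_gt hδq), one_smul]
  set Q := lam • q₁ + (1 - lam) • q₂ with hQdef
  set τ := ⟪e₁, Q⟫_ℝ with hτdef
  have hτne : τ ≠ 0 := hτ2
  set K := 2 * C with hKdef
  have hQQ : 0 ≤ ⟪Q, Q⟫_ℝ := real_inner_self_nonneg
  set M := (2 + K * ⟪Q, Q⟫_ℝ) / τ ^ 2 with hMdef
  have hM : 0 < M := by
    apply div_pos _ (by positivity)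
    have : 0 ≤ K * ⟪Q, Q⟫_ℝ := mul_nonneg (by rw [hKdef]; linarith) hQQ
    linarith
  have hMK : 0 < M + K := by rw [hKdef]; linarith
  have hMτ : M * τ ^ 2 = 2 + K * ⟪Q, Q⟫_ℝ := by
    rw [hMdef]; field_simp
  set φ := testQ x₀ (u x₀) Q (K / 2) (-(M + K) / 2) e₁ with hφdef
  have hφ0 : φ x₀ = u x₀ := by simp [hφdef, testQ]
  have hmin : IsLocalMin (φ - u) x₀ := by
    set rball := δq / (2 * (M + K)) with hrballdef
    have hrball : 0 < rball := by positivity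
    have hball : Metric.ball x₀ rball ∈ nhds x₀ := Metric.ball_mem_nhds _ hrball
    filter_upwards [hbound, hball] with y hy hyb
    rw [Metric.mem_ball, dist_eq_norm] at hyb
    set v := y - x₀ with hvdef
    set s := ⟪e₁, v⟫_ℝ with hsdef
    have hsv : |s| ≤ ‖v‖ := by
      have := abs_real_inner_le_norm e₁ v
      rwa [he₁n, one_mul] at this
    -- min bound
    have hq1v : ⟪q₁, v⟫_ℝ - ⟪q₂, v⟫_ℝ = δq * s := by
      rw [← inner_sub_left, hq12, real_inner_smul_left, hsdef]
    have hQv : ⟪Q, v⟫_ℝ = lam * ⟪q₁, v⟫_ℝ + (1 - lam) * ⟪q₂, v⟫_ℝ := by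
      rw [hQdef, inner_add_left, real_inner_smul_left, real_inner_smul_left]
    have hminb : min ⟪q₁, v⟫_ℝ ⟪q₂, v⟫_ℝ ≤ ⟪Q, v⟫_ℝ - (δq / 4) * |s| := by
      rcases le_or_gt 0 s with hs | hs
      · have h1 : min ⟪q₁, v⟫_ℝ ⟪q₂, v⟫_ℝ ≤ ⟪q₂, v⟫_ℝ := min_le_right _ _
        have h2 : ⟪q₂, v⟫_ℝ = ⟪Q, v⟫_ℝ - lam * (δq * s) := by
          rw [hQv]; nlinarith [hq1v]
        rw [abs_of_nonneg hs]
        nlinarith [mul_nonneg (mul_nonneg (le_of_lt hδq) hs) (by linarith : (0:ℝ) ≤ lam - 1/4)]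
      · have h1 : min ⟪q₁, v⟫_ℝ ⟪q₂, v⟫_ℝ ≤ ⟪q₁, v⟫_ℝ := min_le_left _ _
        have h2 : ⟪q₁, v⟫_ℝ = ⟪Q, v⟫_ℝ + (1 - lam) * (δq * s) := by
          rw [hQv]; nlinarith [hq1v]
        rw [abs_of_neg hs]
        nlinarith [mul_nonneg (mul_nonneg (le_of_lt hδq) (by linarith : (0:ℝ) ≤ -s))
          (by linarith : (0:ℝ) ≤ 3/4 - lam)]
    -- φ value
    have hφy : φ y = u x₀ + ⟪Q, v⟫_ℝ + (K / 2) * ‖v‖ ^ 2 - ((M + K) / 2) * s ^ 2 := by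
      simp only [hφdef, testQ, ← hvdef, ← hsdef]
      rw [real_inner_self_eq_norm_sq]
      ring
    have hs2 : ((M + K) / 2) * s ^ 2 ≤ (δq / 4) * |s| := by
      have h1 : s ^ 2 = |s| * |s| := by rw [← abs_mul, abs_mul_self, pow_two]
      have h2 : |s| ≤ rball := le_trans hsv (le_of_lt hyb)
      have h3 : ((M + K) / 2) * (|s| * |s|) ≤ ((M + K) / 2) * (rball * |s|) := by
        apply mul_le_mul_of_nonneg_left _ (by positivity)
        exact mul_le_mul_of_nonneg_right h2 (abs_nonneg s)
      have h4 : ((M + K) / 2) * (rball * |s|) = (δq / 4) * |s| := by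
        rw [hrballdef]
        field_simp
        ring
      rw [h1]
      linarith
    simp only [Pi.sub_apply]
    rw [hφ0, hφy]
    have hKC : (K / 2 - C) * ‖v‖ ^ 2 = 0 := by rw [hKdef]; ring
    nlinarith [hy, hminb, hs2]
  have hsubappl := hsub φ ((testQ_contDiff _ _ _ _ _ _).contDiffOn) x₀ hx₀ hmin
  rw [hφdef, testQ_infLap] at hsubappl
  have hinfl : -(2 * (K / 2) * ⟪Q, Q⟫_ℝ + 2 * (-(M + K) / 2) * (⟪e₁, Q⟫_ℝ * ⟪e₁, Q⟫_ℝ))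
      = (M + K) * τ ^ 2 - K * ⟪Q, Q⟫_ℝ := by
    rw [← hτdef]
    ring
  rw [hinfl] at hsubappl
  have hτsq : 0 < τ ^ 2 := by positivity
  nlinarith [hsubappl, hMτ, mul_nonneg (by rw [hKdef]; linarith : (0:ℝ) ≤ K) (le_of_lt hτsq)]

lemma aux_kink (hsub : IsViscSubsol Ω u) {x₀ : En 2} (hx₀ : x₀ ∈ Ω)
    {q₁ q₂ : En 2} (hq : q₁ ≠ q₂) {C : ℝ} (hC : 0 ≤ C)
    (hbound : ∀ᶠ y in nhds x₀,
      u y ≤ u x₀ + min ⟪q₁, y - x₀⟫_ℝ ⟪q₂, y - x₀⟫_ℝ + C * ‖y - x₀‖ ^ 2) : False := by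
  set δq := ‖q₁ - q₂‖ with hδqdef
  have hδq : 0 < δq := by
    rw [hδqdef, norm_pos_iff]
    exact sub_ne_zero.mpr hq
  set e₁ := δq⁻¹ • (q₁ - q₂) with he₁def
  have hAB : ⟪e₁, q₁⟫_ℝ - ⟪e₁, q₂⟫_ℝ = δq := by
    rw [← inner_sub_right, he₁def, real_inner_smul_left, real_inner_self_eq_norm_sq, ← hδqdef]
    field_simp
  by_cases hcase : ⟪e₁, q₁⟫_ℝ + ⟪e₁, q₂⟫_ℝ = 0
  · -- use lam = 1/4 ; τ = -δq/4
    apply aux_kink_core hsub hx₀ hq hC hbound (lam := 1/4) (by norm_num) (by norm_num)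
      (Or.inr trivial)
    rw [← he₁def, inner_add_right, real_inner_smul_right, real_inner_smul_right]
    have : (1:ℝ)/4 * ⟪e₁, q₁⟫_ℝ + (1 - 1/4) * ⟪e₁, q₂⟫_ℝ = -δq/4 := by nlinarith [hAB, hcase]
    rw [show ((1:ℝ) - 1/4) = 3/4 by norm_num] at this ⊢
    rw [this]
    intro h
    rw [div_eq_zero_iff] at h
    rcases h with h | h
    · linarith
    · norm_num at h
  · -- use lam = 1/2 ; τ = (A+B)/2 ≠ 0
    apply aux_kink_core hsub hx₀ hq hC hbound (lam := 1/2) (by norm_num) (by norm_num)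
      (Or.inr trivial)
    rw [← he₁def, inner_add_right, real_inner_smul_right, real_inner_smul_right]
    rw [show ((1:ℝ) - 1/2) = 1/2 by norm_num]
    intro h
    apply hcase
    nlinarith [h]

end Kink
section Assembly1

variable {Ω : Set (En 2)} {u : En 2 → ℝ} {f : ℝ → ℝ}

lemma aux_high_closed : IsClosed (highRidge Ω) := by
  have : highRidge Ω = closure Ω ∩ {x | dBd Ω x = rhoΩ Ω} := by
    ext x; simp [highRidge, Set.mem_setOf_eq, Set.mem_inter_iff]
  rw [this]
  exact isClosed_closure.inter (isClosed_eq aux_d_cont continuous_const)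

lemma aux_high_sub_sing (hne : Ω.Nonempty) (hop : IsOpen Ω) (hbd : Bornology.IsBounded Ω) :
    highRidge Ω ⊆ SingSet Ω := by
  rintro x ⟨hxc, hxd⟩
  have hρ : 0 < rhoΩ Ω := aux_rho_pos hne hop hbd
  have hxΩ : x ∈ Ω := aux_mem_of_pos hop hxc (by rw [hxd]; exact hρ)
  refine ⟨hxΩ, ?_⟩
  intro hdiff
  rcases aux_foot hne hop hbd x with ⟨ξ, hξ, hfoot⟩
  have hder := aux_dirderiv hξ hfoot (by rw [hxd]; exact hρ) hdiff
  have hmax : IsLocalMax (dBd Ω) x := by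
    have hball : Metric.ball x (dBd Ω x) ∈ nhds x :=
      Metric.ball_mem_nhds _ (by rw [hxd]; exact hρ)
    filter_upwards [hball] with y hy
    have hyΩ : y ∈ Ω := aux_ball_sub hop hxΩ hy
    rw [hxd]
    exact aux_d_le_rho hbd (subset_closure hyΩ)
  have hzero : fderiv ℝ (dBd Ω) x = 0 := hmax.fderiv_eq_zero
  rw [hzero] at hder
  simp at hder
  rw [hxd] at hder
  linarith

lemma aux_sing_sub_high (hne : Ω.Nonempty) (hop : IsOpen Ω) (hbd : Bornology.IsBounded Ω)
    (hconn : IsConnected Ω) (hsub : IsViscSubsol Ω u) (hsup : IsViscSupersol Ω u)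
    (hwf : ContinuousOn f (Set.Icc 0 (rhoΩ Ω)))
    (hwu : ∀ x ∈ closure Ω, u x = f (dBd Ω x)) :
    SingSet Ω ⊆ highRidge Ω := by
  rintro x ⟨hxΩ, hnd⟩
  have ht₀ : 0 < dBd Ω x := aux_d_pos hne hop hbd hxΩ
  have htρ : dBd Ω x ≤ rhoΩ Ω := aux_d_le_rho hbd (subset_closure hxΩ)
  rcases eq_or_lt_of_le htρ with h | h
  · exact ⟨subset_closure hxΩ, h⟩
  exfalso
  obtain ⟨t₀, ht₀def⟩ : ∃ t : ℝ, t = dBd Ω x := ⟨_, rfl⟩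
  rcases aux_foot hne hop hbd x with ⟨ξ, hξ, hfoot⟩
  by_cases huniq : ∀ ζ ∈ frontier Ω, dist x ζ = dBd Ω x → ζ = ξ
  · exact hnd (aux_diff_of_unique_foot hne hop hbd hxΩ hξ hfoot huniq)
  push_neg at huniq
  rcases huniq with ⟨ζ, hζf, hζfoot, hζne⟩
  rcases aux_linear_bound hne hop hbd hconn hsup hwf hwu
    (show (0:ℝ) < dBd Ω x from ht₀) h with ⟨a, ha, hlin⟩
  set e1 := (dBd Ω x)⁻¹ • (x - ξ) with he1def
  set e2 := (dBd Ω x)⁻¹ • (x - ζ) with he2def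
  have hxξn : ‖x - ξ‖ = dBd Ω x := by rw [← dist_eq_norm, hfoot]
  have hxζn : ‖x - ζ‖ = dBd Ω x := by rw [← dist_eq_norm, hζfoot]
  have he1n : ‖e1‖ = 1 := by
    rw [he1def, norm_smul, Real.norm_eq_abs, abs_of_pos (inv_pos.mpr ht₀), hxξn,
      inv_mul_cancel₀ (ne_of_gt ht₀)]
  have he2n : ‖e2‖ = 1 := by
    rw [he2def, norm_smul, Real.norm_eq_abs, abs_of_pos (inv_pos.mpr ht₀), hxζn,
      inv_mul_cancel₀ (ne_of_gt ht₀)]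
  have hte1 : (dBd Ω x) • e1 = x - ξ := by
    rw [he1def, smul_smul, mul_inv_cancel₀ (ne_of_gt ht₀), one_smul]
  have hte2 : (dBd Ω x) • e2 = x - ζ := by
    rw [he2def, smul_smul, mul_inv_cancel₀ (ne_of_gt ht₀), one_smul]
  have he12 : e1 ≠ e2 := by
    intro hcon
    apply hζne
    have : x - ξ = x - ζ := by rw [← hte1, ← hte2, hcon]
    have h2 : ξ = ζ := sub_right_injective this
    exact h2.symm
  have hq12 : a • e1 ≠ a • e2 := by
    intro hcon
    exact he12 (smul_right_injective _ (ne_of_gt ha) hcon)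
  apply aux_kink hsub hxΩ hq12 (show (0:ℝ) ≤ a / dBd Ω x by positivity)
  -- the eventual bound
  have hball : Metric.ball x (dBd Ω x / 2) ∈ nhds x := Metric.ball_mem_nhds _ (by positivity)
  filter_upwards [hball] with y hy
  rw [Metric.mem_ball, dist_eq_norm] at hy
  set v := y - x with hvdef
  have hyΩ : y ∈ Ω := by
    apply aux_ball_sub hop hxΩ
    rw [Metric.mem_ball, dist_eq_norm, ← hvdef]
    linarith
  have hdyρ : dBd Ω y ≤ rhoΩ Ω := aux_d_le_rho hbd (subset_closure hyΩ)
  have hdy0 : 0 ≤ dBd Ω y := aux_d_nonneg y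
  have hboundi : ∀ (e : En 2) (ξ' : En 2), ‖e‖ = 1 → (dBd Ω x) • e = x - ξ' →
      ξ' ∈ frontier Ω →
      f (dBd Ω y) ≤ u x + ⟪a • e, v⟫_ℝ + (a / dBd Ω x) * ‖v‖ ^ 2 := by
    intro e ξ' hen hte hξ'
    have hse : |⟪e, v⟫_ℝ| ≤ ‖v‖ := by
      have := abs_real_inner_le_norm e v
      rwa [hen, one_mul] at this
    have hdyub : dBd Ω y ≤ dBd Ω x + ⟪e, v⟫_ℝ + (1 / dBd Ω x) * ‖v‖ ^ 2 := by
      have hN : ‖(dBd Ω x) • e + v‖ ≤ dBd Ω x + ⟪e, v⟫_ℝ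
          + (1 / dBd Ω x) * (‖v‖ ^ 2 - ⟪e, v⟫_ℝ ^ 2) :=
        aux_norm_quad hen ht₀ (by
          calc |⟪e, v⟫_ℝ| ≤ ‖v‖ := hse
            _ ≤ dBd Ω x / 2 := le_of_lt hy)
      have hid : (dBd Ω x) • e + v = y - ξ' := by rw [hte, hvdef]; abel
      have hdle : dBd Ω y ≤ ‖(dBd Ω x) • e + v‖ := by
        rw [hid, ← dist_eq_norm]
        exact aux_d_le_dist hξ'
      have hsq : (1 / dBd Ω x) * (‖v‖ ^ 2 - ⟪e, v⟫_ℝ ^ 2) ≤ (1 / dBd Ω x) * ‖v‖ ^ 2 := by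
        apply mul_le_mul_of_nonneg_left _ (by positivity)
        nlinarith [sq_nonneg (⟪e, v⟫_ℝ)]
      linarith
    have hflin : f (dBd Ω y) ≤ f (dBd Ω x) + a * (dBd Ω y - dBd Ω x) := hlin _ hdy0 hdyρ
    have hmono : a * (dBd Ω y - dBd Ω x) ≤ a * (⟪e, v⟫_ℝ + (1 / dBd Ω x) * ‖v‖ ^ 2) := by
      apply mul_le_mul_of_nonneg_left _ (le_of_lt ha)
      linarith
    have hux : u x = f (dBd Ω x) := hwu x (subset_closure hxΩ)
    have hinner : ⟪a • e, v⟫_ℝ = a * ⟪e, v⟫_ℝ := real_inner_smul_left _ _ _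
    have hCid : a * ((1 / dBd Ω x) * ‖v‖ ^ 2) = (a / dBd Ω x) * ‖v‖ ^ 2 := by
      field_simp
    nlinarith [hflin, hmono]
  have huy : u y = f (dBd Ω y) := hwu y (subset_closure hyΩ)
  rw [huy]
  have hb1 := hboundi e1 ξ he1n hte1 hξ
  have hb2 := hboundi e2 ζ he2n hte2 hζf
  rcases le_total ⟪a • e1, y - x⟫_ℝ ⟪a • e2, y - x⟫_ℝ with hmm | hmm
  · rw [min_eq_left hmm]
    exact hb1
  · rw [min_eq_right hmm]
    exact hb2

end Assembly1
section Assembly2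

variable {Ω : Set (En 2)} {u : En 2 → ℝ} {f : ℝ → ℝ}

lemma aux_tube_sub (hne : Ω.Nonempty) (hop : IsOpen Ω) (hbd : Bornology.IsBounded Ω)
    {x : En 2} (hx : Metric.infDist x (highRidge Ω) < rhoΩ Ω) : x ∈ Ω := by
  have hρ : 0 < rhoΩ Ω := aux_rho_pos hne hop hbd
  have hSne : (highRidge Ω).Nonempty := by
    rcases aux_exists_max hne hbd with ⟨xm, hxmc, hxmd⟩
    exact ⟨xm, hxmc, hxmd⟩
  rw [Metric.infDist_lt_iff hSne] at hx
  rcases hx with ⟨y, hyS, hyd⟩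
  have hyΩ : y ∈ Ω := aux_mem_of_pos hop hyS.1 (by rw [hyS.2]; exact hρ)
  by_contra hxΩ
  -- the segment from y to x must cross the frontier
  have hseg : ∃ z ∈ segment ℝ y x, z ∈ frontier Ω := by
    by_contra hcon
    push_neg at hcon
    have := aux_conn_sub hop (convex_segment y x).isPreconnected hcon
      ⟨y, left_mem_segment ℝ y x, hyΩ⟩
    exact hxΩ (this (right_mem_segment ℝ y x))
  rcases hseg with ⟨z, hzseg, hzf⟩
  rcases hzseg with ⟨a, b, ha, hb, hab, rfl⟩
  have hdistz : dist y (a • y + b • x) ≤ dist y x := by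
    have hid : y - (a • y + b • x) = b • (y - x) := by
      have : a = 1 - b := by linarith
      rw [this]; module
    rw [dist_eq_norm, hid, norm_smul, Real.norm_eq_abs, abs_of_nonneg hb, dist_eq_norm]
    nlinarith [norm_nonneg (y - x), hb, hab]
  have h1 : rhoΩ Ω ≤ dist y (a • y + b • x) := by
    rw [← hyS.2]
    exact aux_d_le_dist hzf
  rw [dist_comm] at hyd
  linarith

lemma aux_omega_sub_tube (hne : Ω.Nonempty) (hop : IsOpen Ω) (hbd : Bornology.IsBounded Ω)
    (hsing : SingSet Ω ⊆ highRidge Ω)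
    {x : En 2} (hx : x ∈ Ω) : Metric.infDist x (highRidge Ω) < rhoΩ Ω := by
  have hρ : 0 < rhoΩ Ω := aux_rho_pos hne hop hbd
  have ht₀ : 0 < dBd Ω x := aux_d_pos hne hop hbd hx
  have htρ : dBd Ω x ≤ rhoΩ Ω := aux_d_le_rho hbd (subset_closure hx)
  rcases eq_or_lt_of_le htρ with heq | hlt
  · -- x itself is on the high ridge
    have : x ∈ highRidge Ω := ⟨subset_closure hx, heq⟩
    rw [Metric.infDist_zero_of_mem this]
    exact hρ
  -- main case
  set t := dBd Ω x with htdef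
  set R := rhoΩ Ω - t with hRdef
  have hR : 0 < R := by rw [hRdef]; linarith
  set A := Metric.closedBall x R ∩ closure Ω with hAdef
  have hAcomp : IsCompact A := (isCompact_closedBall x R).inter_right isClosed_closure
  have hAne : A.Nonempty := ⟨x, Metric.mem_closedBall_self (le_of_lt hR), subset_closure hx⟩
  rcases hAcomp.exists_isMaxOn hAne (aux_d_cont (Ω := Ω)).continuousOn with ⟨ym, hymA, hymmax⟩
  set m := dBd Ω ym with hmdef
  have hmρ : m ≤ rhoΩ Ω := aux_d_le_rho hbd hymA.2
  have hmt : t ≤ m := hymmax ⟨Metric.mem_closedBall_self (le_of_lt hR), subset_closure hx⟩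
  have hmeq : m = rhoΩ Ω := by
    by_contra hmne
    have hm : m < rhoΩ Ω := lt_of_le_of_ne hmρ hmne
    set α := (m - t) / R with hαdef
    have hα0 : 0 ≤ α := by apply div_nonneg (by linarith) (le_of_lt hR)
    have hα1 : α < 1 := by rw [hαdef, div_lt_one hR, hRdef]; linarith
    -- maximize h := d - α * dist · x on A
    have hhc : ContinuousOn (fun y => dBd Ω y - α * dist y x) A :=
      (aux_d_cont.continuousOn).sub
        ((continuous_const.mul (continuous_id.dist continuous_const)).continuousOn)
    rcases hAcomp.exists_isMaxOn hAne hhc with ⟨z0, hz0A, hz0max⟩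
    have hxA : x ∈ A := ⟨Metric.mem_closedBall_self (le_of_lt hR), subset_closure hx⟩
    have hhx : dBd Ω x - α * dist x x = t := by rw [dist_self]; ring_nf; exact htdef.symm
    have hz0x : t ≤ dBd Ω z0 - α * dist z0 x := by
      have h9 := hz0max hxA
      simp only [Set.mem_setOf_eq] at h9
      rw [hhx] at h9
      exact h9
    have hz0Ω : z0 ∈ Ω := by
      by_contra hcon
      have hfr : z0 ∈ frontier Ω := by
        rw [frontier, hop.interior_eq]
        exact ⟨hz0A.2, hcon⟩
      have h0 : dBd Ω z0 = 0 := aux_d_frontier hfr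
      have : 0 ≤ α * dist z0 x := mul_nonneg hα0 dist_nonneg
      rw [h0] at hz0x
      linarith
    have hαR : α * R = m - t := by rw [hαdef]; field_simp
    -- select a maximizer with dist < R
    have hzex : ∃ z, z ∈ Ω ∧ dist z x < R ∧
        (∀ w' ∈ A, dBd Ω w' - α * dist w' x ≤ dBd Ω z - α * dist z x) := by
      by_cases hz0d : dist z0 x < R
      · exact ⟨z0, hz0Ω, hz0d, fun w' hw' => hz0max hw'⟩
      · have hz0R : dist z0 x = R := by
          have := hz0A.1
          rw [Metric.mem_closedBall] at this
          exact le_antisymm this (le_of_not_gt hz0d)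
        have hdz0m : dBd Ω z0 ≤ m := hymmax hz0A
        have hz0val : dBd Ω z0 - α * dist z0 x ≤ t := by
          rw [hz0R]
          linarith [hαR, hdz0m]
        refine ⟨x, hx, by rw [dist_self]; exact hR, ?_⟩
        intro w' hw'
        have h1 := hz0max hw'
        simp only [Set.mem_setOf_eq] at h1
        rw [hhx]
        exact le_trans h1 hz0val
    rcases hzex with ⟨z, hzΩ, hzdR, hzmax⟩
    have hzA : z ∈ A := ⟨Metric.mem_closedBall.mpr (le_of_lt hzdR), subset_closure hzΩ⟩
    have hdzm : dBd Ω z ≤ m := hymmax hzA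
    have hdiff : DifferentiableAt ℝ (dBd Ω) z := by
      by_contra hnd
      have hhigh := hsing ⟨hzΩ, hnd⟩
      have : dBd Ω z = rhoΩ Ω := hhigh.2
      linarith
    rcases aux_foot hne hop hbd z with ⟨ξz, hξzf, hξzfoot⟩
    have hdz : 0 < dBd Ω z := aux_d_pos hne hop hbd hzΩ
    have hder := aux_dirderiv hξzf hξzfoot hdz hdiff
    have hwn : ‖ξz - z‖ = dBd Ω z := by
      rw [← dist_eq_norm, dist_comm, hξzfoot]
    have hbnd : fderiv ℝ (dBd Ω) z (-(ξz - z)) ≤ (α * ‖ξz - z‖) := by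
      apply aux_dirbound hdiff
      have hΦc : Continuous (fun s : ℝ => z + s • (-(ξz - z))) := by
        apply continuous_const.add
        exact (continuous_id.smul continuous_const)
      have hΦ0 : z + (0:ℝ) • (-(ξz - z)) = z := by simp
      have hopen : IsOpen (Ω ∩ Metric.ball x R) := hop.inter Metric.isOpen_ball
      have hzmem : z ∈ Ω ∩ Metric.ball x R := ⟨hzΩ, Metric.mem_ball.mpr hzdR⟩
      have hev : ∀ᶠ s in nhds (0:ℝ), z + s • (-(ξz - z)) ∈ Ω ∩ Metric.ball x R := by
        have hcontat := hΦc.continuousAt (x := (0:ℝ))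
        rw [ContinuousAt, hΦ0] at hcontat
        exact hcontat (hopen.mem_nhds hzmem)
      filter_upwards [hev.filter_mono nhdsWithin_le_nhds, self_mem_nhdsWithin] with s hs hs0
      rw [Set.mem_Ioi] at hs0
      have hsA : z + s • (-(ξz - z)) ∈ A :=
        ⟨Metric.ball_subset_closedBall hs.2, subset_closure hs.1⟩
      have hmax2 := hzmax _ hsA
      have hdist2 : dist (z + s • (-(ξz - z))) x ≤ dist z x + s * ‖ξz - z‖ := by
        calc dist (z + s • (-(ξz - z))) x ≤ dist (z + s • (-(ξz - z))) z + dist z x :=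
            dist_triangle _ _ _
          _ = s * ‖ξz - z‖ + dist z x := by
            rw [dist_eq_norm]
            have : z + s • (-(ξz - z)) - z = s • (-(ξz - z)) := by abel
            rw [this, norm_smul, Real.norm_eq_abs, abs_of_pos hs0, norm_neg]
          _ = dist z x + s * ‖ξz - z‖ := by ring
      have halg : α * dist (z + s • (-(ξz - z))) x - α * dist z x ≤ α * (s * ‖ξz - z‖) := by
        have := mul_le_mul_of_nonneg_left hdist2 hα0
        nlinarith [this]
      have : dBd Ω (z + s • (-(ξz - z))) - dBd Ω z
          ≤ α * dist (z + s • (-(ξz - z))) x - α * dist z x := by linarith [hmax2]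
      calc dBd Ω (z + s • (-(ξz - z))) - dBd Ω z
          ≤ α * (s * ‖ξz - z‖) := by linarith
        _ = (α * ‖ξz - z‖) * s := by ring
    rw [map_neg, hder] at hbnd
    rw [hwn] at hbnd
    -- -(-(d z)) = d z ≤ α d z, contradiction with α < 1
    have : dBd Ω z ≤ α * dBd Ω z := by linarith [hbnd]
    nlinarith [this, hα1, hdz]
  -- m = ρ : done
  have : ym ∈ highRidge Ω := ⟨hymA.2, by rw [← hmdef, hmeq]⟩
  have h2 : Metric.infDist x (highRidge Ω) ≤ dist x ym := Metric.infDist_le_dist_of_mem this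
  have h3 : dist x ym ≤ R := by
    have := hymA.1
    rw [Metric.mem_closedBall] at this
    rw [dist_comm]
    exact this
  rw [hRdef] at h3
  linarith

end Assembly2
/-- In dimension 2, if the Dirichlet problem admits a web viscosity solution,
then `Ω` is the open tubular neighborhood of radius `ρ_Ω` of `S := Cut(Ω) = high(Ω)`. -/
theorem planar_tubular_neighborhood (Ω : Set (En 2)) (hne : Ω.Nonempty)
    (hop : IsOpen Ω) (hbd : Bornology.IsBounded Ω) (hconn : IsConnected Ω)
    (u : En 2 → ℝ) (hu : IsDirichletSol Ω u) (hweb : IsWebOn Ω u) :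
    cutLocus Ω = highRidge Ω ∧
      Ω = {x : En 2 | Metric.infDist x (cutLocus Ω) < rhoΩ Ω} := by
  rcases hweb with ⟨f, hwf, hwu⟩
  have hsub : IsViscSubsol Ω u := hu.2.2.2.1
  have hsup : IsViscSupersol Ω u := hu.2.2.2.2
  have hsing : SingSet Ω ⊆ highRidge Ω :=
    aux_sing_sub_high hne hop hbd hconn hsub hsup hwf hwu
  have hhigh : highRidge Ω ⊆ SingSet Ω := aux_high_sub_sing hne hop hbd
  have hSH : SingSet Ω = highRidge Ω := Set.Subset.antisymm hsing hhigh
  have hpart1 : cutLocus Ω = highRidge Ω := by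
    rw [cutLocus, hSH, aux_high_closed.closure_eq]
  refine ⟨hpart1, ?_⟩
  ext x
  simp only [Set.mem_setOf_eq]
  rw [hpart1]
  constructor
  · intro hx
    exact aux_omega_sub_tube hne hop hbd hsing hx
  · intro hx
    exact aux_tube_sub hne hop hbd hx
end

section
/- Let Ω ⊂ ℝⁿ be an open bounded convex set and let x₀ ∈ Σ(Ω). Then for every p ∈ D⁺d_∂Ω(x₀) with |p| < 1 there exist a constant K > 0 and a unit vector ζ ∈ ℝⁿ such that d_∂Ω(x) ≤ d_∂Ω(x₀) + ⟨p, x−x₀⟩ − K·|⟨ζ, x−x₀⟩| for all x ∈ Ω. -/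
open scoped InnerProductSpace
open Metric Set Filter

noncomputable section AuxLemmas
variable {n : ℕ}

lemma auxA (a h : En n) (ha : a ≠ 0) :
    ‖a‖ + ⟪a, h⟫_ℝ / ‖a‖ ≤ ‖a + h‖ := by
  have h0 : 0 < ‖a‖ := norm_pos_iff.mpr ha
  have h1 : ⟪a, a + h⟫_ℝ ≤ ‖a‖ * ‖a + h‖ := real_inner_le_norm a (a + h)
  rw [inner_add_right, real_inner_self_eq_norm_sq] at h1
  rw [show ‖a‖ + ⟪a, h⟫_ℝ / ‖a‖ = (‖a‖ ^ 2 + ⟪a, h⟫_ℝ) / ‖a‖ by field_simp,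
    div_le_iff₀ h0]
  nlinarith [h1]

lemma auxB (a h : En n) (ha : a ≠ 0) :
    ‖a + h‖ ≤ ‖a‖ + ⟪a, h⟫_ℝ / ‖a‖ + ‖h‖ ^ 2 / (2 * ‖a‖) := by
  have h0 : 0 < ‖a‖ := norm_pos_iff.mpr ha
  have h1 : ‖a + h‖ ^ 2 = ‖a‖ ^ 2 + 2 * ⟪a, h⟫_ℝ + ‖h‖ ^ 2 := by
    have := @norm_add_sq_real (En n) _ _ a h
    linarith
  have h2 : (0:ℝ) ≤ ‖a + h‖ := norm_nonneg _
  rw [show ‖a‖ + ⟪a, h⟫_ℝ / ‖a‖ + ‖h‖ ^ 2 / (2 * ‖a‖)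
      = (2 * ‖a‖ ^ 2 + 2 * ⟪a, h⟫_ℝ + ‖h‖ ^ 2) / (2 * ‖a‖) by field_simp,
    le_div_iff₀ (by positivity)]
  nlinarith [sq_nonneg (‖a‖ - ‖a + h‖)]

def sjoin (V A : Set (En n)) : Set (En n) :=
  (fun q : ℝ × En n × En n => q.1 • q.2.1 + (1 - q.1) • q.2.2) ''
    ((Set.Icc (0:ℝ) 1) ×ˢ (A ×ˢ V))

def jiter (V : Set (En n)) : ℕ → Set (En n)
  | 0 => V
  | k+1 => sjoin V (jiter V k)

lemma jiter_isCompact {V : Set (En n)} (hV : IsCompact V) : ∀ k, IsCompact (jiter V k) := by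
  intro k
  induction k with
  | zero => exact hV
  | succ k ih =>
    have : IsCompact ((Set.Icc (0:ℝ) 1) ×ˢ ((jiter V k) ×ˢ V)) :=
      (isCompact_Icc).prod (ih.prod hV)
    exact this.image (by fun_prop)

lemma subset_sjoin {V A : Set (En n)} (hV : V.Nonempty) : A ⊆ sjoin V A := by
  obtain ⟨v, hv⟩ := hV
  intro a ha
  exact ⟨(1, a, v), ⟨⟨zero_le_one, le_refl 1⟩, ha, hv⟩, by simp⟩

lemma jiter_subset_convexHull {V : Set (En n)} : ∀ k, jiter V k ⊆ convexHull ℝ V := by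
  intro k
  induction k with
  | zero => exact subset_convexHull ℝ V
  | succ k ih =>
    rintro x ⟨⟨t, a, v⟩, ⟨⟨ht0, ht1⟩, haA, hvV⟩, rfl⟩
    exact (convex_convexHull ℝ V) (ih haA) (subset_convexHull ℝ V hvV) ht0 (by linarith) (by ring)

lemma convexHull_finset_subset_jiter {V : Set (En n)} (hVne : V.Nonempty) :
    ∀ k, ∀ t : Finset (En n), ↑t ⊆ V → t.card ≤ k + 1 →
      convexHull ℝ (↑t : Set (En n)) ⊆ jiter V k := by
  classical
  intro k
  induction k with
  | zero =>
    intro t htV hcard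
    rcases t.eq_empty_or_nonempty with rfl | ⟨a, ha⟩
    · simp
    · have : t = {a} := Finset.eq_singleton_iff_unique_mem.mpr
        ⟨ha, fun b hb => Finset.card_le_one.mp hcard b hb a ha⟩
      subst this
      intro x hx
      simp only [Finset.coe_singleton, convexHull_singleton, Set.mem_singleton_iff] at hx
      subst hx
      exact htV (by simp)
  | succ k ih =>
    intro t htV hcard
    by_cases hsmall : t.card ≤ k + 1
    · exact (ih t htV hsmall).trans (subset_sjoin hVne)
    · push_neg at hsmall
      have hcard' : t.card = k + 2 := le_antisymm hcard hsmall
      obtain ⟨a, ha⟩ := Finset.card_pos.mp (by omega : 0 < t.card)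
      have herase : (t.erase a).card = k + 1 := by
        rw [Finset.card_erase_of_mem ha, hcard']
        omega
      have herase_ne : ((t.erase a : Finset (En n)) : Set (En n)).Nonempty := by
        rw [Finset.coe_nonempty, ← Finset.card_pos, herase]; omega
      intro x hx
      have hx' : x ∈ convexHull ℝ (insert a ((t.erase a : Finset (En n)) : Set (En n))) := by
        rw [← Finset.coe_insert, Finset.insert_erase ha]; exact hx
      rw [convexHull_insert herase_ne, mem_convexJoin] at hx'
      obtain ⟨a', ha', y, hy, hseg⟩ := hx'
      rw [Set.mem_singleton_iff] at ha'
      subst ha'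
      obtain ⟨c1, c2, hc1, hc2, hc12, rfl⟩ := hseg
      have hyJ : y ∈ jiter V k :=
        ih (t.erase a') ((Finset.coe_subset.mpr (Finset.erase_subset a' t)).trans htV) (by omega) hy
      refine ⟨(c2, y, a'), ⟨⟨hc2, by linarith⟩, hyJ, htV ha⟩, ?_⟩
      simp only
      rw [show (1 - c2) = c1 by linarith]
      abel

lemma isCompact_convexHull_of_isCompact {V : Set (En n)} (hV : IsCompact V) :
    IsCompact (convexHull ℝ V) := by
  rcases V.eq_empty_or_nonempty with rfl | hVne
  · simp
  · have heq : convexHull ℝ V = jiter V n := by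
      apply Subset.antisymm
      · rw [convexHull_eq_union]
        refine Set.iUnion_subset fun t => Set.iUnion_subset fun htV =>
          Set.iUnion_subset fun hindep => ?_
        have hcard : t.card ≤ n + 1 := by
          have h1 := hindep.card_le_finrank_succ
          rw [Fintype.card_coe] at h1
          have h2 : Module.finrank ℝ ↥(vectorSpan ℝ (Set.range (Subtype.val : ↥t → En n)))
              ≤ Module.finrank ℝ (En n) := Submodule.finrank_le _
          have h3 : Module.finrank ℝ (En n) = n := finrank_euclideanSpace_fin
          omega
        exact convexHull_finset_subset_jiter hVne n t htV hcard
      · exact jiter_subset_convexHull n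
    rw [heq]
    exact jiter_isCompact hV n

end AuxLemmas

set_option maxHeartbeats 1000000 in
/-- Estimate of the distance function near a singular point, convex case. -/
theorem distance_estimate_at_singular_point_convex {n : ℕ} (Ω : Set (En n))
    (hop : IsOpen Ω) (hbd : Bornology.IsBounded Ω) (hconv : Convex ℝ Ω)
    (x₀ : En n) (hx₀ : x₀ ∈ SingSet Ω)
    (p : En n) (hp : p ∈ superDiff (dBd Ω) x₀) (hp1 : ‖p‖ < 1) :
    ∃ K > (0 : ℝ), ∃ ζ : En n, ‖ζ‖ = 1 ∧
      ∀ x ∈ Ω, dBd Ω x ≤ dBd Ω x₀ + ⟪p, x - x₀⟫_ℝ - K * |⟪ζ, x - x₀⟫_ℝ| := by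
  classical
  obtain ⟨hx₀Ω, hx₀nd⟩ := hx₀
  by_cases hFne : (frontier Ω).Nonempty
  swap
  · exfalso
    apply hx₀nd
    have h0 : dBd Ω = fun _ => (0:ℝ) := by
      funext x
      rw [dBd, Set.not_nonempty_iff_eq_empty.mp hFne, Metric.infDist_empty]
    rw [h0]
    exact differentiableAt_const 0
  have hFclosed : IsClosed (frontier Ω) := isClosed_frontier
  have hFcompact : IsCompact (frontier Ω) :=
    Metric.isCompact_of_isClosed_isBounded hFclosed (hbd.closure.subset frontier_subset_closure)
  have hmemF : ∀ z ∈ frontier Ω, z ∉ Ω := by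
    intro z hz
    rw [hop.frontier_eq] at hz
    exact hz.2
  have hdpos : ∀ x ∈ Ω, 0 < dBd Ω x := by
    intro x hx
    exact (hFclosed.notMem_iff_infDist_pos hFne).mp (fun h => hmemF _ h hx)
  have hd0 : 0 < dBd Ω x₀ := hdpos x₀ hx₀Ω
  -- the ball of radius `dBd Ω x` around `x ∈ Ω` is contained in `Ω`
  have hball : ∀ x ∈ Ω, Metric.ball x (dBd Ω x) ⊆ Ω := by
    intro x hx z hz
    by_contra hzΩ
    have hzx : dist x z < dBd Ω x := by rw [dist_comm]; exact Metric.mem_ball.mp hz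
    have hdisj : Disjoint (frontier Ω) (segment ℝ x z) := by
      rw [Set.disjoint_left]
      intro w hwF hwseg
      obtain ⟨a, b, ha, hb, hab, rfl⟩ := hwseg
      have hdist : dist x (a • x + b • z) ≤ dist x z := by
        have hxx : x - (a • x + b • z) = b • (x - z) := by
          match_scalars <;> linarith
        rw [dist_eq_norm, hxx, norm_smul, Real.norm_eq_abs, abs_of_nonneg hb, dist_eq_norm]
        nlinarith [norm_nonneg (x - z)]
      have h1 : dBd Ω x ≤ dist x (a • x + b • z) := Metric.infDist_le_dist_of_mem hwF
      linarith
    haveI : PreconnectedSpace ↥(segment ℝ x z) :=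
      Subtype.preconnectedSpace (convex_segment x z).isPreconnected
    have hclopen := isClopen_preimage_val hop hdisj
    have huniv := hclopen.eq_univ ⟨⟨x, left_mem_segment ℝ x z⟩, hx⟩
    have hzmem : (⟨z, right_mem_segment ℝ x z⟩ : ↥(segment ℝ x z)) ∈
        (Subtype.val ⁻¹' Ω : Set ↥(segment ℝ x z)) := by
      rw [huniv]; trivial
    exact hzΩ hzmem
  -- concavity-type chord inequality anchored at `x₀`
  have hchord : ∀ x ∈ Ω, ∀ t : ℝ, t ∈ Set.Ioo (0:ℝ) 1 →
      t * dBd Ω x + (1 - t) * dBd Ω x₀ ≤ dBd Ω (x₀ + t • (x - x₀)) := by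
    intro x hx t ht
    obtain ⟨ht0, ht1⟩ := ht
    have hdx : 0 < dBd Ω x := hdpos x hx
    set r := t * dBd Ω x + (1 - t) * dBd Ω x₀ with hr
    have hrpos : 0 < r := by nlinarith
    refine le_of_not_gt fun hlt => ?_
    obtain ⟨z, hzF, hzd⟩ := (Metric.infDist_lt_iff hFne).mp hlt
    apply hmemF z hzF
    set xb := x₀ + t • (x - x₀) with hxb
    set h := z - xb with hh
    have hnh : ‖h‖ < r := by
      rw [hh, ← dist_eq_norm']
      exact hzd
    have hz1 : z = t • (x + (dBd Ω x / r) • h) + (1 - t) • (x₀ + (dBd Ω x₀ / r) • h) := by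
      have hs : t * (dBd Ω x / r) + (1 - t) * (dBd Ω x₀ / r) = 1 := by
        field_simp
        rw [hr]
      rw [hh, hxb]
      match_scalars <;> field_simp <;> ring
    have hm1 : x + (dBd Ω x / r) • h ∈ Ω := by
      apply hball x hx
      rw [Metric.mem_ball, dist_comm, dist_eq_norm]
      have : x - (x + (dBd Ω x / r) • h) = -((dBd Ω x / r) • h) := by abel
      rw [this, norm_neg, norm_smul, Real.norm_eq_abs, abs_of_nonneg (by positivity)]
      calc dBd Ω x / r * ‖h‖ < dBd Ω x / r * r := by
            apply mul_lt_mul_of_pos_left hnh (by positivity)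
        _ = dBd Ω x := by field_simp
    have hm2 : x₀ + (dBd Ω x₀ / r) • h ∈ Ω := by
      apply hball x₀ hx₀Ω
      rw [Metric.mem_ball, dist_comm, dist_eq_norm]
      have : x₀ - (x₀ + (dBd Ω x₀ / r) • h) = -((dBd Ω x₀ / r) • h) := by abel
      rw [this, norm_neg, norm_smul, Real.norm_eq_abs, abs_of_nonneg (by positivity)]
      calc dBd Ω x₀ / r * ‖h‖ < dBd Ω x₀ / r * r := by
            apply mul_lt_mul_of_pos_left hnh (by positivity)
        _ = dBd Ω x₀ := by field_simp
    rw [hz1]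
    exact hconv hm1 hm2 ht0.le (by linarith) (by ring)
  -- the local superdifferential inequality globalizes by concavity
  have hSp : ∀ x ∈ Ω, dBd Ω x ≤ dBd Ω x₀ + ⟪p, x - x₀⟫_ℝ := by
    intro x hx
    rcases eq_or_ne x x₀ with rfl | hxne
    · simp
    apply le_of_forall_pos_le_add
    intro ε hε
    set v := x - x₀ with hv
    have hvne : v ≠ 0 := sub_ne_zero.mpr hxne
    have hvpos : 0 < ‖v‖ := norm_pos_iff.mpr hvne
    have hε' : 0 < ε / (‖v‖ + 1) := by positivity
    have hev := hp (ε / (‖v‖ + 1)) hε'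
    have hT : Filter.Tendsto (fun t : ℝ => x₀ + t • v) (nhdsWithin 0 (Set.Ioi 0)) (nhds x₀) := by
      have hc : Continuous fun t : ℝ => x₀ + t • v :=
        continuous_const.add (continuous_id.smul continuous_const)
      have h2 : Filter.Tendsto (fun t : ℝ => x₀ + t • v) (nhds 0) (nhds x₀) := by
        simpa using hc.tendsto 0
      exact h2.mono_left nhdsWithin_le_nhds
    have hev2 := hT.eventually hev
    have hev3 : ∀ᶠ t : ℝ in nhdsWithin 0 (Set.Ioi 0), t ∈ Set.Ioo (0:ℝ) 1 :=
      Ioo_mem_nhdsGT_of_mem ⟨le_refl 0, zero_lt_one⟩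
    obtain ⟨t, htq, ht0, ht1⟩ := (hev2.and hev3).exists
    have hch := hchord x hx t ⟨ht0, ht1⟩
    have harg : x₀ + t • v - x₀ = t • v := by abel
    rw [harg, real_inner_smul_right, norm_smul, Real.norm_eq_abs, abs_of_pos ht0] at htq
    have hkey : t * (dBd Ω x - dBd Ω x₀ - ⟪p, v⟫_ℝ) ≤ t * (ε / (‖v‖ + 1) * ‖v‖) := by
      nlinarith [hch, htq]
    have hkey2 : dBd Ω x - dBd Ω x₀ - ⟪p, v⟫_ℝ ≤ ε / (‖v‖ + 1) * ‖v‖ :=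
      le_of_mul_le_mul_left hkey ht0
    have hfin : ε / (‖v‖ + 1) * ‖v‖ ≤ ε := by
      rw [div_mul_eq_mul_div, div_le_iff₀ (by positivity)]
      nlinarith
    linarith
  -- each projection direction is a global supergradient
  have hnu : ∀ y ∈ frontier Ω, dist x₀ y = dBd Ω x₀ →
      ∀ x ∈ Ω, dBd Ω x ≤ dBd Ω x₀ + ⟪(dBd Ω x₀)⁻¹ • (x₀ - y), x - x₀⟫_ℝ := by
    intro y hyF hyd x hx
    set a := x₀ - y with hadef
    have hna : ‖a‖ = dBd Ω x₀ := by rw [hadef, ← dist_eq_norm]; exact hyd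
    have hane : a ≠ 0 := by
      intro h0; rw [h0, norm_zero] at hna; linarith
    apply le_of_forall_pos_le_add
    intro ε hε
    set v := x - x₀ with hv
    set t := min (1/2 : ℝ) (ε * dBd Ω x₀ / (‖v‖^2 + 1)) with htdef
    have ht0 : 0 < t := lt_min (by norm_num) (by positivity)
    have ht1 : t < 1 := lt_of_le_of_lt (min_le_left _ _) (by norm_num)
    have hch := hchord x hx t ⟨ht0, ht1⟩
    have hub : dBd Ω (x₀ + t • v) ≤ dist (x₀ + t • v) y := Metric.infDist_le_dist_of_mem hyF
    have heq : x₀ + t • v - y = a + t • v := by rw [hadef]; abel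
    rw [dist_eq_norm, heq] at hub
    have h1 : dBd Ω (x₀ + t • v) ≤ ‖a‖ + ⟪a, t • v⟫_ℝ / ‖a‖ + ‖t • v‖^2 / (2 * ‖a‖) :=
      hub.trans (auxB a (t • v) hane)
    rw [real_inner_smul_right, norm_smul, Real.norm_eq_abs, abs_of_pos ht0, hna] at h1
    rw [real_inner_smul_left]
    have htb : t ≤ ε * dBd Ω x₀ / (‖v‖^2 + 1) := min_le_right _ _
    have hstep : t * ‖v‖^2 ≤ ε * dBd Ω x₀ := by
      calc t * ‖v‖^2 ≤ (ε * dBd Ω x₀ / (‖v‖^2 + 1)) * ‖v‖^2 :=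
            mul_le_mul_of_nonneg_right htb (by positivity)
        _ ≤ ε * dBd Ω x₀ := by
            rw [div_mul_eq_mul_div, div_le_iff₀ (by positivity)]
            nlinarith [sq_nonneg ‖v‖, hε.le, hd0.le]
    have hquad : (t * ‖v‖)^2 / (2 * dBd Ω x₀) ≤ t * ε := by
      rw [div_le_iff₀ (by positivity)]
      nlinarith [hstep, ht0.le, ht1.le]
    have hdiv : t * ⟪a, v⟫_ℝ / dBd Ω x₀ = t * ((dBd Ω x₀)⁻¹ * ⟪a, v⟫_ℝ) := by
      field_simp
    have hkey : t * dBd Ω x ≤ t * (dBd Ω x₀ + (dBd Ω x₀)⁻¹ * ⟪a, v⟫_ℝ + ε) := by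
      nlinarith [hch, h1, hquad, hdiv]
    have := le_of_mul_le_mul_left hkey ht0
    linarith
  -- the set of global supergradients is convex
  have hSconv : Convex ℝ {q : En n | ∀ x ∈ Ω, dBd Ω x ≤ dBd Ω x₀ + ⟪q, x - x₀⟫_ℝ} := by
    intro q₁ hq₁ q₂ hq₂ a b ha hb hab
    intro x hx
    have h1 := hq₁ x hx
    have h2 := hq₂ x hx
    have hin : ⟪a • q₁ + b • q₂, x - x₀⟫_ℝ
        = a * ⟪q₁, x - x₀⟫_ℝ + b * ⟪q₂, x - x₀⟫_ℝ := by
      rw [inner_add_left, real_inner_smul_left, real_inner_smul_left]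
    show dBd Ω x ≤ dBd Ω x₀ + ⟪a • q₁ + b • q₂, x - x₀⟫_ℝ
    rw [hin]
    have e2 := mul_le_mul_of_nonneg_left h1 ha
    have e3 := mul_le_mul_of_nonneg_left h2 hb
    rw [mul_add] at e2 e3
    have e1 : a * dBd Ω x + b * dBd Ω x = dBd Ω x := by rw [← add_mul, hab, one_mul]
    have e4 : a * dBd Ω x₀ + b * dBd Ω x₀ = dBd Ω x₀ := by rw [← add_mul, hab, one_mul]
    linarith
  obtain ⟨y₀, hy₀F, hy₀d⟩ := hFcompact.exists_infDist_eq_dist hFne x₀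
  set V : Set (En n) :=
    (fun y => (dBd Ω x₀)⁻¹ • (x₀ - y)) '' {y ∈ frontier Ω | dist x₀ y = dBd Ω x₀} with hVdef
  have hVne : V.Nonempty := ⟨_, ⟨y₀, ⟨hy₀F, hy₀d.symm⟩, rfl⟩⟩
  have hVS : V ⊆ {q : En n | ∀ x ∈ Ω, dBd Ω x ≤ dBd Ω x₀ + ⟪q, x - x₀⟫_ℝ} := by
    rintro _ ⟨y, ⟨hyF, hyd⟩, rfl⟩
    exact hnu y hyF hyd
  have hVnorm : ∀ q ∈ V, ‖q‖ = 1 := by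
    rintro _ ⟨y, ⟨hyF, hyd⟩, rfl⟩
    rw [norm_smul, norm_inv, Real.norm_eq_abs, abs_of_pos hd0, ← dist_eq_norm]
    rw [hyd]
    field_simp
  have hVcompact : IsCompact V := by
    have hPclosed : IsClosed {y ∈ frontier Ω | dist x₀ y = dBd Ω x₀} := by
      have : {y ∈ frontier Ω | dist x₀ y = dBd Ω x₀}
          = frontier Ω ∩ {y | dist x₀ y = dBd Ω x₀} := rfl
      rw [this]
      exact hFclosed.inter (isClosed_eq (by fun_prop) continuous_const)
    exact ((hFcompact.of_isClosed_subset hPclosed (Set.sep_subset _ _)).image (by fun_prop))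
  have hCcompact := isCompact_convexHull_of_isCompact hVcompact
  have hCS : convexHull ℝ V ⊆ {q : En n | ∀ x ∈ Ω, dBd Ω x ≤ dBd Ω x₀ + ⟪q, x - x₀⟫_ℝ} :=
    convexHull_min hVS hSconv
  -- KEY CLAIM: `p` belongs to the convex hull of the unit normal directions
  have hpC : p ∈ convexHull ℝ V := by
    by_contra hpC
    obtain ⟨f, u₀, hfC, hfp⟩ := geometric_hahn_banach_closed_point
      (convex_convexHull ℝ V) hCcompact.isClosed hpC
    set w := (InnerProductSpace.toDual ℝ (En n)).symm f with hwdef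
    have hw : ∀ q : En n, ⟪w, q⟫_ℝ = f q := fun q => InnerProductSpace.toDual_symm_apply
    have hfpV : ∀ q ∈ V, f q < u₀ := fun q hq => hfC q (subset_convexHull ℝ V hq)
    have hwne : w ≠ 0 := by
      intro h0
      obtain ⟨q, hq⟩ := hVne
      have h1 := hfpV q hq
      have h2 : f q = 0 := by rw [← hw q, h0, inner_zero_left]
      have h3 : f p = 0 := by rw [← hw p, h0, inner_zero_left]
      rw [h2] at h1; rw [h3] at hfp; linarith
    have hwpos : 0 < ‖w‖ := norm_pos_iff.mpr hwne
    set η := (f p - u₀) / 2 with hηdef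
    have hηpos : 0 < η := by
      rw [hηdef]; linarith
    have hδ : ∃ δ > 0, ∀ y ∈ frontier Ω, dist x₀ y < dBd Ω x₀ + δ →
        f (‖x₀ - y‖⁻¹ • (x₀ - y)) < u₀ + η := by
      set Fbad := {y ∈ frontier Ω | u₀ + η ≤ f (‖x₀ - y‖⁻¹ • (x₀ - y))} with hFbad
      rcases Fbad.eq_empty_or_nonempty with hFbe | hFbne
      · refine ⟨1, one_pos, fun y hyF _ => ?_⟩
        by_contra hcon
        push_neg at hcon
        have hmem : y ∈ Fbad := ⟨hyF, hcon⟩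
        rw [hFbe] at hmem
        exact hmem
      · have hFnz : ∀ y ∈ frontier Ω, ‖x₀ - y‖ ≠ 0 := by
          intro y hyF
          have h5 : dBd Ω x₀ ≤ dist x₀ y := Metric.infDist_le_dist_of_mem hyF
          rw [dist_eq_norm] at h5
          exact ne_of_gt (lt_of_lt_of_le hd0 h5)
        have hFbclosed : IsClosed Fbad := by
          have hcont : ContinuousOn (fun y => f (‖x₀ - y‖⁻¹ • (x₀ - y))) (frontier Ω) := by
            apply f.continuous.comp_continuousOn
            refine ContinuousOn.smul (f := fun y => ‖x₀ - y‖⁻¹) (g := fun y => x₀ - y) ?_ ?_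
            · exact ContinuousOn.inv₀ (by fun_prop) hFnz
            · fun_prop
          have heqset : Fbad = frontier Ω ∩
              (fun y => f (‖x₀ - y‖⁻¹ • (x₀ - y))) ⁻¹' (Set.Ici (u₀ + η)) := rfl
          rw [heqset]
          exact hcont.preimage_isClosed_of_isClosed hFclosed isClosed_Ici
        have hFbcompact := hFcompact.of_isClosed_subset hFbclosed (Set.sep_subset _ _)
        obtain ⟨y₁, hy₁Fb, hy₁d⟩ := hFbcompact.exists_infDist_eq_dist hFbne x₀
        have hy₁F : y₁ ∈ frontier Ω := hy₁Fb.1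
        have hge : dBd Ω x₀ ≤ dist x₀ y₁ := Metric.infDist_le_dist_of_mem hy₁F
        have hstrict : dBd Ω x₀ < dist x₀ y₁ := by
          rcases hge.lt_or_eq with h | h
          · exact h
          · exfalso
            have hVmem : (dBd Ω x₀)⁻¹ • (x₀ - y₁) ∈ V := ⟨y₁, ⟨hy₁F, h.symm⟩, rfl⟩
            have h2 := hfpV _ hVmem
            have h3 : ‖x₀ - y₁‖ = dBd Ω x₀ := by rw [← dist_eq_norm, ← h]
            have h4 := hy₁Fb.2
            rw [h3] at h4
            linarith
        refine ⟨dist x₀ y₁ - dBd Ω x₀, by linarith, ?_⟩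
        intro y hyF hylt
        by_contra hcon
        push_neg at hcon
        have hyFb : y ∈ Fbad := ⟨hyF, hcon⟩
        have h6 : Metric.infDist x₀ Fbad ≤ dist x₀ y := Metric.infDist_le_dist_of_mem hyFb
        rw [hy₁d] at h6
        linarith
    obtain ⟨δ, hδpos, hδprop⟩ := hδ
    set t := min (δ / (3 * ‖w‖)) (dBd Ω x₀ / (2 * ‖w‖)) with htdef
    have ht0 : 0 < t := lt_min (by positivity) (by positivity)
    have htw1 : t * ‖w‖ < dBd Ω x₀ := by
      calc t * ‖w‖ ≤ (dBd Ω x₀ / (2 * ‖w‖)) * ‖w‖ :=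
            mul_le_mul_of_nonneg_right (min_le_right _ _) (norm_nonneg w)
        _ = dBd Ω x₀ / 2 := by field_simp
        _ < dBd Ω x₀ := by linarith
    have htw2 : 2 * (t * ‖w‖) < δ := by
      have h7 : t * ‖w‖ ≤ (δ / (3 * ‖w‖)) * ‖w‖ :=
        mul_le_mul_of_nonneg_right (min_le_left _ _) (norm_nonneg w)
      have h8 : (δ / (3 * ‖w‖)) * ‖w‖ = δ / 3 := by field_simp
      rw [h8] at h7
      linarith
    set xt := x₀ - t • w with hxt
    have hxtΩ : xt ∈ Ω := by
      apply hball x₀ hx₀Ω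
      rw [Metric.mem_ball, hxt, dist_eq_norm]
      have h9 : x₀ - t • w - x₀ = -(t • w) := by abel
      rw [h9, norm_neg, norm_smul, Real.norm_eq_abs, abs_of_pos ht0]
      exact htw1
    obtain ⟨yt, hytF, hytd⟩ := hFcompact.exists_infDist_eq_dist hFne xt
    set aa := x₀ - yt with haa
    have haage : dBd Ω x₀ ≤ ‖aa‖ := by
      rw [haa, ← dist_eq_norm]
      exact Metric.infDist_le_dist_of_mem hytF
    have haanz : aa ≠ 0 := by
      intro h0; rw [h0, norm_zero] at haage; linarith
    have hlow := auxA aa (-(t • w)) haanz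
    have heq2 : aa + -(t • w) = xt - yt := by rw [haa, hxt]; abel
    rw [heq2, inner_neg_right, real_inner_smul_right] at hlow
    have hup : dBd Ω xt ≤ dBd Ω x₀ + ⟪p, xt - x₀⟫_ℝ := hSp xt hxtΩ
    have hdxt : dBd Ω xt = ‖xt - yt‖ := by rw [← dist_eq_norm]; exact hytd
    have hxtx0 : xt - x₀ = -(t • w) := by rw [hxt]; abel
    rw [hxtx0, inner_neg_right, real_inner_smul_right] at hup
    rw [hdxt] at hup
    have hcomb : ⟪p, w⟫_ℝ ≤ ⟪aa, w⟫_ℝ / ‖aa‖ := by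
      have h10 : -(t * ⟪aa, w⟫_ℝ) / ‖aa‖ = -(t * (⟪aa, w⟫_ℝ / ‖aa‖)) := by ring
      rw [h10] at hlow
      have h11 : t * ⟪p, w⟫_ℝ ≤ t * (⟪aa, w⟫_ℝ / ‖aa‖) := by linarith
      exact le_of_mul_le_mul_left h11 ht0
    have hdyt : dist x₀ yt < dBd Ω x₀ + δ := by
      have l1 : dist x₀ yt ≤ dist x₀ xt + dist xt yt := dist_triangle _ _ _
      have l2 : dist x₀ xt = t * ‖w‖ := by
        rw [hxt, dist_eq_norm]
        have h12 : x₀ - (x₀ - t • w) = t • w := by abel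
        rw [h12, norm_smul, Real.norm_eq_abs, abs_of_pos ht0]
      have l3 : dist xt yt = dBd Ω xt := hytd.symm
      have l4 : dBd Ω xt ≤ dBd Ω x₀ + dist xt x₀ := Metric.infDist_le_infDist_add_dist
      rw [dist_comm] at l4
      rw [l2] at l4
      linarith
    have hbad := hδprop yt hytF hdyt
    have hfp2 : f p = ⟪p, w⟫_ℝ := by rw [real_inner_comm]; exact (hw p).symm
    have hfyt : f (‖x₀ - yt‖⁻¹ • (x₀ - yt)) = ⟪aa, w⟫_ℝ / ‖aa‖ := by
      rw [← hw _, real_inner_smul_right, real_inner_comm, ← haa]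
      field_simp
    rw [hfyt] at hbad
    rw [hηdef] at hbad
    rw [hfp2] at hfp
    linarith
  -- since `‖p‖ < 1`, `p` is not an extreme point of the hull
  have hpnotex : p ∉ (convexHull ℝ V).extremePoints ℝ := by
    intro hex
    have h13 := extremePoints_convexHull_subset hex
    have h14 := hVnorm p h13
    linarith
  rw [mem_extremePoints_iff_forall_segment] at hpnotex
  push_neg at hpnotex
  obtain ⟨x₁, hx₁C, x₂, hx₂C, hseg, hne1, hne2⟩ := hpnotex hpC
  obtain ⟨a, b, ha, hb, hab, hcomb⟩ := hseg
  have hapos : 0 < a := by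
    rcases ha.lt_or_eq with h | h
    · exact h
    · exfalso
      apply hne2
      rw [← hcomb, ← h, zero_smul, zero_add, show b = 1 by linarith, one_smul]
  have hbpos : 0 < b := by
    rcases hb.lt_or_eq with h | h
    · exact h
    · exfalso
      apply hne1
      rw [← hcomb, ← h, zero_smul, add_zero, show a = 1 by linarith, one_smul]
  have hune : x₁ - x₂ ≠ 0 := by
    intro h0
    apply hne1
    have h15 : x₁ = x₂ := by
      have := sub_eq_zero.mp h0; exact this
    rw [← hcomb, h15, show b • x₂ = b • x₂ from rfl]
    rw [← add_smul, hab, one_smul]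
  have hupos : 0 < ‖x₁ - x₂‖ := norm_pos_iff.mpr hune
  set s := min a b with hsdef
  have hspos : 0 < s := lt_min hapos hbpos
  have hsa : s ≤ a := min_le_left _ _
  have hsb : s ≤ b := min_le_right _ _
  have hmem1 : p + s • (x₁ - x₂) ∈ convexHull ℝ V := by
    have hrep : p + s • (x₁ - x₂) = (a + s) • x₁ + (b - s) • x₂ := by
      rw [← hcomb]; match_scalars <;> ring
    rw [hrep]
    exact (convex_convexHull ℝ V) hx₁C hx₂C (by linarith) (by linarith) (by linarith)
  have hmem2 : p - s • (x₁ - x₂) ∈ convexHull ℝ V := by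
    have hrep : p - s • (x₁ - x₂) = (a - s) • x₁ + (b + s) • x₂ := by
      rw [← hcomb]; match_scalars <;> ring
    rw [hrep]
    exact (convex_convexHull ℝ V) hx₁C hx₂C (by linarith) (by linarith) (by linarith)
  refine ⟨s * ‖x₁ - x₂‖, by positivity, ‖x₁ - x₂‖⁻¹ • (x₁ - x₂), ?_, ?_⟩
  · rw [norm_smul, norm_inv, norm_norm]
    field_simp
  · intro x hx
    have g1 := hCS hmem1 x hx
    have g2 := hCS hmem2 x hx
    rw [inner_add_left, real_inner_smul_left] at g1
    rw [inner_sub_left, real_inner_smul_left] at g2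
    rw [real_inner_smul_left]
    have habs : s * ‖x₁ - x₂‖ * |‖x₁ - x₂‖⁻¹ * ⟪x₁ - x₂, x - x₀⟫_ℝ|
        = s * |⟪x₁ - x₂, x - x₀⟫_ℝ| := by
      rw [abs_mul, abs_inv, abs_norm]
      field_simp
    rw [habs]
    rcases abs_cases (⟪x₁ - x₂, x - x₀⟫_ℝ) with ⟨h16, _⟩ | ⟨h16, _⟩ <;> rw [h16] <;> linarith
end

section
/- Let S ⊂ ℝⁿ be a nonempty closed set and let x ∉ S. Then the distance function d_S is differentiable at x if and only if the projection set π_S(x) is a singleton; in that case, writing π_S(x) = {y}, one has ∇d_S(x) = (x − y)/d_S(x). -/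
open scoped InnerProductSpace
open Metric Set Filter

section Aux

open InnerProductSpace in
private lemma toDual_smul_sub {n : ℕ} (c : ℝ) (a : En n) :
    InnerProductSpace.toDual ℝ (En n) (c • a) = c • innerSL ℝ a := by
  ext z
  simp [InnerProductSpace.toDual_apply_apply, inner_smul_left]

private lemma hasFDerivAt_dist_pt {n : ℕ} (y x : En n) (hxy : x ≠ y) :
    HasFDerivAt (fun z => dist z y) ((dist x y)⁻¹ • innerSL ℝ (x - y)) x := by
  have ha : x - y ≠ 0 := sub_ne_zero.mpr hxy
  have hn : (0 : ℝ) < ‖x - y‖ := norm_pos_iff.mpr ha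
  have h1 : HasFDerivAt (fun z : En n => ‖z - y‖ ^ 2)
      (2 • (innerSL ℝ (x - y))) x := by
    have := ((hasFDerivAt_id x).sub_const y).norm_sq
    simpa using this
  have h2 : HasDerivAt Real.sqrt (1 / (2 * Real.sqrt (‖x - y‖ ^ 2))) (‖x - y‖ ^ 2) :=
    Real.hasDerivAt_sqrt (by positivity)
  have h3 := h2.comp_hasFDerivAt x h1
  have hfun : (Real.sqrt ∘ fun z : En n => ‖z - y‖ ^ 2) = fun z => dist z y := by
    funext z
    simp [Function.comp, Real.sqrt_sq (norm_nonneg _), dist_eq_norm]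
  rw [hfun] at h3
  refine h3.congr_fderiv ?_
  have hs : Real.sqrt (‖x - y‖ ^ 2) = ‖x - y‖ := Real.sqrt_sq (norm_nonneg _)
  ext z
  simp only [ContinuousLinearMap.coe_smul', Pi.smul_apply, two_smul,
    ContinuousLinearMap.add_apply, hs, dist_eq_norm, smul_eq_mul]
  field_simp
  ring

private lemma norm_add_ge_aux {n : ℕ} (a v : En n) (ha : a ≠ 0) :
    ‖a‖ + ⟪‖a‖⁻¹ • a, v⟫_ℝ ≤ ‖a + v‖ := by
  have hn : (0 : ℝ) < ‖a‖ := norm_pos_iff.mpr ha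
  have h := real_inner_le_norm a (a + v)
  rw [inner_add_right, real_inner_self_eq_norm_sq] at h
  rw [real_inner_smul_left]
  rw [← mul_le_mul_iff_right₀ hn]
  calc ‖a‖ * (‖a‖ + ‖a‖⁻¹ * ⟪a, v⟫_ℝ) = ‖a‖ ^ 2 + ⟪a, v⟫_ℝ := by
        field_simp
    _ ≤ ‖a‖ * ‖a + v‖ := h

private lemma proj_cont {n : ℕ} (S : Set (En n)) (hSc : IsClosed S) (x y : En n)
    (hproj : projSet S x = {y}) :
    ∀ ε > 0, ∃ δ > 0, ∀ z w, dist z x < δ → w ∈ projSet S z → dist w y < ε := by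
  by_contra hcon
  push_neg at hcon
  obtain ⟨ε, hε, h⟩ := hcon
  choose z w hz hw hwy using fun k : ℕ => h (1 / (k + 1)) (by positivity)
  set R : ℝ := Metric.infDist x S + 2 with hR
  have hdzx : ∀ k : ℕ, dist (z k) x ≤ 1 := by
    intro k
    refine (hz k).le.trans ?_
    rw [div_le_one (by positivity)]
    linarith [Nat.cast_nonneg (α := ℝ) k]
  have hwball : ∀ k : ℕ, w k ∈ Metric.closedBall x R := by
    intro k
    have h1 : dist (z k) (w k) = Metric.infDist (z k) S := (hw k).2
    have h2 : Metric.infDist (z k) S ≤ Metric.infDist x S + dist (z k) x :=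
      Metric.infDist_le_infDist_add_dist
    have h3 : dist (w k) x ≤ dist (w k) (z k) + dist (z k) x := dist_triangle _ _ _
    rw [dist_comm (w k) (z k)] at h3
    simp only [Metric.mem_closedBall]
    have := hdzx k
    linarith
  obtain ⟨l, -, φ, hφ, htend⟩ :=
    (isCompact_closedBall x R).tendsto_subseq hwball
  have hlS : l ∈ S := hSc.mem_of_tendsto htend (Filter.Eventually.of_forall fun k => (hw _).1)
  have hzx : Filter.Tendsto (fun k => z (φ k)) Filter.atTop (nhds x) := by
    rw [tendsto_iff_dist_tendsto_zero]
    refine squeeze_zero (fun k => dist_nonneg) (fun k => ?_)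
      tendsto_one_div_add_atTop_nhds_zero_nat
    refine (hz (φ k)).le.trans ?_
    gcongr
    exact_mod_cast hφ.le_apply
  have hdl : dist x l = Metric.infDist x S := by
    have h1 : Filter.Tendsto (fun k => dist x (w (φ k))) Filter.atTop (nhds (dist x l)) :=
      Filter.Tendsto.dist tendsto_const_nhds htend
    have h2 : Filter.Tendsto (fun k => dist x (z (φ k)) + Metric.infDist (z (φ k)) S)
        Filter.atTop (nhds (0 + Metric.infDist x S)) := by
      refine Filter.Tendsto.add ?_ ?_
      · exact (tendsto_iff_dist_tendsto_zero.mp hzx).congr fun k => dist_comm _ _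
      · exact ((Metric.continuous_infDist_pt S).continuousAt.tendsto.comp hzx)
    have hle : dist x l ≤ Metric.infDist x S := by
      rw [show Metric.infDist x S = 0 + Metric.infDist x S by ring]
      refine le_of_tendsto_of_tendsto' h1 h2 fun k => ?_
      calc dist x (w (φ k)) ≤ dist x (z (φ k)) + dist (z (φ k)) (w (φ k)) := dist_triangle _ _ _
        _ = dist x (z (φ k)) + Metric.infDist (z (φ k)) S := by rw [(hw (φ k)).2]
    exact le_antisymm hle (Metric.infDist_le_dist_of_mem hlS)
  have hly : l = y := by
    have : l ∈ projSet S x := ⟨hlS, hdl⟩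
    rw [hproj] at this
    exact this
  have : Filter.Tendsto (fun k => dist (w (φ k)) y) Filter.atTop (nhds 0) := by
    rw [← hly, ← dist_self l]
    exact Filter.Tendsto.dist htend tendsto_const_nhds
  have := (this.eventually (eventually_lt_nhds hε)).exists
  obtain ⟨k, hk⟩ := this
  exact absurd hk (not_lt.mpr (hwy (φ k)))

end Aux

/-- For a nonempty closed set `S` and `x ∉ S`, the distance function `d_S`
is differentiable at `x` iff the projection set is a singleton, and in that case
`∇d_S(x) = (x - y)/d_S(x)`. -/
theorem distance_differentiable_iff_unique_projection {n : ℕ} (S : Set (En n))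
    (hS : S.Nonempty) (hSc : IsClosed S) (x : En n) (hx : x ∉ S) :
    (DifferentiableAt ℝ (fun z => Metric.infDist z S) x ↔ ∃ y, projSet S x = {y}) ∧
      ∀ y : En n, projSet S x = {y} →
        gradient (fun z => Metric.infDist z S) x = (Metric.infDist x S)⁻¹ • (x - y) := by
  have hd0 : 0 < Metric.infDist x S := by
    rw [← (hSc.notMem_iff_infDist_pos hS)]; exact hx
  -- the forward claim: if differentiable, fderiv is determined by any projection
  have claim : DifferentiableAt ℝ (fun z => Metric.infDist z S) x → ∀ y ∈ projSet S x,
      fderiv ℝ (fun z => Metric.infDist z S) x =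
        InnerProductSpace.toDual ℝ (En n) ((Metric.infDist x S)⁻¹ • (x - y)) := by
    intro hdiff y hy
    have hxy : x ≠ y := fun h => hx (h ▸ hy.1)
    have hdist : dist x y = Metric.infDist x S := hy.2
    have hG : HasFDerivAt (fun z => dist z y)
        ((dist x y)⁻¹ • innerSL ℝ (x - y)) x := hasFDerivAt_dist_pt y x hxy
    have hmin : IsLocalMin (fun z => dist z y - Metric.infDist z S) x := by
      refine Filter.Eventually.of_forall fun z => ?_
      have h1 : Metric.infDist z S ≤ dist z y := Metric.infDist_le_dist_of_mem hy.1
      simp only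
      rw [hdist]
      linarith
    have hsub : HasFDerivAt (fun z => dist z y - Metric.infDist z S)
        ((dist x y)⁻¹ • innerSL ℝ (x - y) - fderiv ℝ (fun z => Metric.infDist z S) x) x :=
      hG.sub hdiff.hasFDerivAt
    have h0 := hmin.hasFDerivAt_eq_zero hsub
    rw [sub_eq_zero] at h0
    rw [toDual_smul_sub, ← hdist]
    exact h0.symm
  have huniq : DifferentiableAt ℝ (fun z => Metric.infDist z S) x →
      ∀ y₁ ∈ projSet S x, ∀ y₂ ∈ projSet S x, y₁ = y₂ := by
    intro hdiff y₁ h₁ y₂ h₂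
    have e := (claim hdiff y₁ h₁).symm.trans (claim hdiff y₂ h₂)
    have e2 := (InnerProductSpace.toDual ℝ (En n)).injective e
    have hc : (Metric.infDist x S)⁻¹ ≠ 0 := inv_ne_zero hd0.ne'
    have e3 := smul_right_injective (En n) hc e2
    exact sub_right_injective e3
  obtain ⟨y₀, hy₀S, hy₀d⟩ := hSc.exists_infDist_eq_dist hS x
  have hy₀ : y₀ ∈ projSet S x := ⟨hy₀S, hy₀d.symm⟩
  -- the reverse construction
  have hgrad : ∀ y : En n, projSet S x = {y} →
      HasFDerivAt (fun z => Metric.infDist z S)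
        (InnerProductSpace.toDual ℝ (En n) ((Metric.infDist x S)⁻¹ • (x - y))) x := by
    intro y hy
    have hymem : y ∈ projSet S x := by rw [hy]; exact rfl
    have hxy : x ≠ y := fun h => hx (h ▸ hymem.1)
    have hdist : dist x y = Metric.infDist x S := hymem.2
    set L : En n →L[ℝ] ℝ := (dist x y)⁻¹ • innerSL ℝ (x - y) with hL
    have hLp : InnerProductSpace.toDual ℝ (En n)
        ((Metric.infDist x S)⁻¹ • (x - y)) = L := by
      rw [toDual_smul_sub, ← hdist]
    rw [hLp]
    have hG : HasFDerivAt (fun z => dist z y) L x := hasFDerivAt_dist_pt y x hxy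
    set p : En n := (Metric.infDist x S)⁻¹ • (x - y) with hp
    have hLap : ∀ v : En n, L v = ⟪p, v⟫_ℝ := by
      intro v
      rw [← hLp, InnerProductSpace.toDual_apply_apply]
    rw [hasFDerivAt_iff_isLittleO, Asymptotics.isLittleO_iff]
    intro c hc
    have hGl := hG
    rw [hasFDerivAt_iff_isLittleO, Asymptotics.isLittleO_iff] at hGl
    -- upper bound
    have hup : ∀ᶠ z in nhds x,
        Metric.infDist z S - Metric.infDist x S - L (z - x) ≤ c * ‖z - x‖ := by
      filter_upwards [hGl hc] with z hz
      have h2 : dist z y - dist x y - L (z - x) ≤ c * ‖z - x‖ :=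
        (le_abs_self _).trans (by rwa [Real.norm_eq_abs] at hz)
      have h3 : Metric.infDist z S ≤ dist z y := Metric.infDist_le_dist_of_mem hymem.1
      rw [hdist] at h2
      linarith
    -- lower bound
    have hfc : ContinuousAt (fun w : En n => ‖x - w‖⁻¹ • (x - w)) y := by
      have h1 : ContinuousAt (fun w : En n => x - w) y :=
        (continuous_const.sub continuous_id).continuousAt
      exact (h1.norm.inv₀ (norm_ne_zero_iff.mpr (sub_ne_zero.mpr hxy))).smul h1
    have hfy : (fun w : En n => ‖x - w‖⁻¹ • (x - w)) y = p := by
      simp only [hp, ← dist_eq_norm, hdist]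
    obtain ⟨ε, hε, hball⟩ := Metric.continuousAt_iff.mp hfc c hc
    obtain ⟨δ, hδ, hδ'⟩ := proj_cont S hSc x y hy ε hε
    have hlow : ∀ᶠ z in nhds x,
        -(c * ‖z - x‖) ≤ Metric.infDist z S - Metric.infDist x S - L (z - x) := by
      rw [Metric.eventually_nhds_iff]
      refine ⟨δ, hδ, fun z hzδ => ?_⟩
      obtain ⟨w, hwS, hwd⟩ := hSc.exists_infDist_eq_dist hS z
      have hwproj : w ∈ projSet S z := ⟨hwS, hwd.symm⟩
      have hwy : dist w y < ε := hδ' z w hzδ hwproj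
      have hxw : x - w ≠ 0 := sub_ne_zero.mpr (fun h => hx (h ▸ hwS))
      set u : En n := ‖x - w‖⁻¹ • (x - w) with hu
      have key : ‖x - w‖ + ⟪u, z - x⟫_ℝ ≤ ‖(x - w) + (z - x)‖ :=
        norm_add_ge_aux _ _ hxw
      rw [show (x - w) + (z - x) = z - w by abel] at key
      have h2 : Metric.infDist x S ≤ ‖x - w‖ := by
        rw [← dist_eq_norm x w]; exact Metric.infDist_le_dist_of_mem hwS
      have h3 : Metric.infDist z S = ‖z - w‖ := by rw [hwd, dist_eq_norm]
      have h4 : ‖u - p‖ < c := by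
        have h := hball hwy
        rw [dist_eq_norm] at h
        have hpn : p = ‖x - y‖⁻¹ • (x - y) := by rw [hp, ← hdist, dist_eq_norm]
        rw [hpn]
        exact h
      have h5 : -(c * ‖z - x‖) ≤ ⟪u - p, z - x⟫_ℝ := by
        have ha := abs_real_inner_le_norm (u - p) (z - x)
        have hb : ‖u - p‖ * ‖z - x‖ ≤ c * ‖z - x‖ :=
          mul_le_mul_of_nonneg_right h4.le (norm_nonneg _)
        have := neg_abs_le ⟪u - p, z - x⟫_ℝ
        linarith
      rw [inner_sub_left] at h5
      rw [hLap]
      linarith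
    filter_upwards [hup, hlow] with z h1 h2
    rw [Real.norm_eq_abs, abs_le]
    exact ⟨by linarith, h1⟩
  constructor
  · constructor
    · intro hdiff
      exact ⟨y₀, Set.eq_singleton_iff_unique_mem.mpr
        ⟨hy₀, fun w hw => huniq hdiff w hw y₀ hy₀⟩⟩
    · rintro ⟨y, hy⟩
      exact (hgrad y hy).differentiableAt
  · intro y hy
    have hdiff := (hgrad y hy).differentiableAt
    have hymem : y ∈ projSet S x := by rw [hy]; exact rfl
    have := claim hdiff y hymem
    show (InnerProductSpace.toDual ℝ (En n)).symm
      (fderiv ℝ (fun z => Metric.infDist z S) x) = _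
    rw [this, LinearIsometryEquiv.symm_apply_apply]
end

section
/- Let S ⊂ ℝⁿ be a nonempty closed set and let x ∉ S be a point where d_S is not differentiable. Then D*d_S(x) = {(x−y)/|x−y| : y ∈ π_S(x)} and D⁺d_S(x) = conv(D*d_S(x)) = (x − conv(π_S(x)))/d_S(x). -/
open scoped InnerProductSpace
open Metric Set Filter

open Topology

section AuxProofs

variable {n : ℕ}

lemma aux_exists_proj (S : Set (En n)) (hS : S.Nonempty) (hSc : IsClosed S) (z : En n) :
    ∃ y, y ∈ projSet S z := by
  obtain ⟨y, hy, hd⟩ := hSc.exists_infDist_eq_dist hS z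
  exact ⟨y, hy, hd.symm⟩

lemma aux_proj_norm {S : Set (En n)} {z y : En n} (hy : y ∈ projSet S z) :
    ‖z - y‖ = Metric.infDist z S := by
  rw [← dist_eq_norm]; exact hy.2

lemma aux_upper (a h : En n) (ha : a ≠ 0) :
    ‖a + h‖ - ‖a‖ - ⟪‖a‖⁻¹ • a, h⟫_ℝ ≤ ‖h‖ ^ 2 / (2 * ‖a‖) := by
  have hc : (0:ℝ) < ‖a‖ := norm_pos_iff.mpr ha
  have hsq : ‖a + h‖ ^ 2 = ‖a‖ ^ 2 + 2 * ⟪a, h⟫_ℝ + ‖h‖ ^ 2 := by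
    rw [norm_add_sq_real]
  have hip : ⟪‖a‖⁻¹ • a, h⟫_ℝ = ‖a‖⁻¹ * ⟪a, h⟫_ℝ := real_inner_smul_left a h _
  have key : 2 * ‖a‖ * ‖a + h‖ ≤ 2 * ‖a‖ ^ 2 + 2 * ⟪a, h⟫_ℝ + ‖h‖ ^ 2 := by
    nlinarith [sq_nonneg (‖a + h‖ - ‖a‖)]
  rw [hip, sub_sub, le_div_iff₀ (by positivity : (0:ℝ) < 2 * ‖a‖)]
  have h6 : ‖a‖⁻¹ * ⟪a, h⟫_ℝ * (2 * ‖a‖) = 2 * ⟪a, h⟫_ℝ := by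
    field_simp
  nlinarith [key, h6]

lemma aux_lower {S : Set (En n)} {z h y : En n} (hy : y ∈ projSet S (z + h)) (hzy : z ≠ y) :
    Metric.infDist z S + ⟪‖z - y‖⁻¹ • (z - y), h⟫_ℝ ≤ Metric.infDist (z + h) S := by
  have hzy' : z - y ≠ 0 := sub_ne_zero.mpr hzy
  have hnz : (0:ℝ) < ‖z - y‖ := norm_pos_iff.mpr hzy'
  have h1 : Metric.infDist (z + h) S = ‖(z - y) + h‖ := by
    rw [← hy.2, dist_eq_norm]; congr 1; abel
  have h2 : ⟪‖z - y‖⁻¹ • (z - y), (z - y) + h⟫_ℝ ≤ ‖(z - y) + h‖ := by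
    calc ⟪‖z - y‖⁻¹ • (z - y), (z - y) + h⟫_ℝ
        ≤ ‖‖z - y‖⁻¹ • (z - y)‖ * ‖(z - y) + h‖ := real_inner_le_norm _ _
      _ = ‖(z - y) + h‖ := by
          rw [norm_smul, norm_inv, norm_norm, inv_mul_cancel₀ hnz.ne', one_mul]
  have h3 : ⟪‖z - y‖⁻¹ • (z - y), z - y⟫_ℝ = ‖z - y‖ := by
    rw [real_inner_smul_left, real_inner_self_eq_norm_sq]
    field_simp
  have h4 : Metric.infDist z S ≤ ‖z - y‖ := by
    rw [← dist_eq_norm]; exact Metric.infDist_le_dist_of_mem hy.1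
  have h5 : ⟪‖z - y‖⁻¹ • (z - y), (z - y) + h⟫_ℝ
      = ‖z - y‖ + ⟪‖z - y‖⁻¹ • (z - y), h⟫_ℝ := by
    rw [inner_add_right, h3]
  rw [h1]; linarith

lemma aux_mem_superDiff {S : Set (En n)} {x y : En n} (hx : x ∉ S) (hy : y ∈ projSet S x) :
    ‖x - y‖⁻¹ • (x - y) ∈ superDiff (fun z => Metric.infDist z S) x := by
  intro ε hε
  have hxy : x ≠ y := fun h => hx (h ▸ hy.1)
  have ha : x - y ≠ 0 := sub_ne_zero.mpr hxy
  have hc : (0:ℝ) < ‖x - y‖ := norm_pos_iff.mpr ha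
  have hδ : (0:ℝ) < 2 * ‖x - y‖ * ε := by positivity
  filter_upwards [Metric.ball_mem_nhds x hδ] with z hz
  have hupper : Metric.infDist z S ≤ ‖(x - y) + (z - x)‖ := by
    rw [show (x - y) + (z - x) = z - y by abel, ← dist_eq_norm]
    exact Metric.infDist_le_dist_of_mem hy.1
  have h2 := aux_upper (x - y) (z - x) ha
  have h3 : ‖x - y‖ = Metric.infDist x S := aux_proj_norm hy
  have h5 : ‖z - x‖ < 2 * ‖x - y‖ * ε := by rw [← dist_eq_norm]; exact hz
  have h4 : ‖z - x‖ ^ 2 / (2 * ‖x - y‖) ≤ ε * ‖z - x‖ := by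
    rw [div_le_iff₀ (by positivity)]
    nlinarith [norm_nonneg (z - x)]
  linarith

lemma aux_superDiff_convex (u : En n → ℝ) (x : En n) : Convex ℝ (superDiff u x) := by
  intro p hp q hq a b ha hb hab
  intro ε hε
  filter_upwards [hp ε hε, hq ε hε] with z h1 h2
  have e1 : ⟪a • p + b • q, z - x⟫_ℝ = a * ⟪p, z - x⟫_ℝ + b * ⟪q, z - x⟫_ℝ := by
    rw [inner_add_left, real_inner_smul_left, real_inner_smul_left]
  have key : u z - u x - ⟪a • p + b • q, z - x⟫_ℝ
      = a * (u z - u x - ⟪p, z - x⟫_ℝ) + b * (u z - u x - ⟪q, z - x⟫_ℝ) := by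
    rw [e1]; linear_combination (u z - u x) * hab.symm
  have h1' : a * (u z - u x - ⟪p, z - x⟫_ℝ) ≤ a * (ε * ‖z - x‖) :=
    mul_le_mul_of_nonneg_left h1 ha
  have h2' : b * (u z - u x - ⟪q, z - x⟫_ℝ) ≤ b * (ε * ‖z - x‖) :=
    mul_le_mul_of_nonneg_left h2 hb
  have e2 : a * (ε * ‖z - x‖) + b * (ε * ‖z - x‖) = ε * ‖z - x‖ := by
    linear_combination (ε * ‖z - x‖) * hab
  linarith

lemma aux_cluster {S : Set (En n)} (hS : S.Nonempty) (hSc : IsClosed S) {z : En n}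
    {zs : ℕ → En n} (hzs : Tendsto zs atTop (𝓝 z)) {Y : ℕ → En n}
    (hY : ∀ k, Y k ∈ projSet S (zs k)) :
    ∃ y ∈ projSet S z, ∃ φ : ℕ → ℕ, StrictMono φ ∧ Tendsto (Y ∘ φ) atTop (𝓝 y) := by
  have hd : Tendsto (fun k => Metric.infDist (zs k) S) atTop (𝓝 (Metric.infDist z S)) :=
    ((Metric.continuous_infDist_pt S).tendsto z).comp hzs
  have hb : ∀ᶠ k in atTop, dist (Y k) z ≤ Metric.infDist z S + 2 := by
    have h1 : ∀ᶠ k in atTop, dist (zs k) z < 1 := by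
      have := (tendsto_iff_dist_tendsto_zero.mp hzs).eventually (eventually_lt_nhds one_pos)
      exact this
    have h2 : ∀ᶠ k in atTop, Metric.infDist (zs k) S < Metric.infDist z S + 1 :=
      hd.eventually (eventually_lt_nhds (lt_add_one _))
    filter_upwards [h1, h2] with k hk1 hk2
    have h3 : dist (Y k) z ≤ dist (Y k) (zs k) + dist (zs k) z := dist_triangle _ _ _
    have h4 : dist (Y k) (zs k) = Metric.infDist (zs k) S := by
      rw [dist_comm]; exact (hY k).2
    linarith
  obtain ⟨N, hN⟩ := eventually_atTop.mp hb
  obtain ⟨y, -, ψ, hψ, htend⟩ := tendsto_subseq_of_bounded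
    (Metric.isBounded_closedBall (x := z) (r := Metric.infDist z S + 2))
    (x := fun k => Y (k + N)) (fun k => by
      simpa [Metric.mem_closedBall] using hN (k + N) (Nat.le_add_left _ _))
  refine ⟨y, ?_, fun k => ψ k + N, fun a b hab => Nat.add_lt_add_right (hψ hab) N, htend⟩
  have hφt : Tendsto (fun k => ψ k + N) atTop atTop :=
    tendsto_atTop_mono (fun k => Nat.le_add_right _ _) hψ.tendsto_atTop
  have hy1 : y ∈ S := hSc.mem_of_tendsto htend (Eventually.of_forall fun k => (hY _).1)
  have hzsφ : Tendsto (fun k => zs (ψ k + N)) atTop (𝓝 z) := hzs.comp hφt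
  have h5 : Tendsto (fun k => dist (zs (ψ k + N)) (Y (ψ k + N))) atTop (𝓝 (dist z y)) :=
    hzsφ.dist htend
  have h6 : (fun k => dist (zs (ψ k + N)) (Y (ψ k + N)))
      = fun k => Metric.infDist (zs (ψ k + N)) S := funext fun k => (hY _).2
  have h7 : Tendsto (fun k => Metric.infDist (zs (ψ k + N)) S) atTop
      (𝓝 (Metric.infDist z S)) := hd.comp hφt
  rw [h6] at h5
  exact ⟨hy1, by rw [dist_comm] at h5 ⊢; exact tendsto_nhds_unique h5 h7⟩

lemma aux_claimA {S : Set (En n)} (hS : S.Nonempty) (hSc : IsClosed S) {x : En n} (hx : x ∉ S)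
    {p : En n} (hp : p ∈ superDiff (fun z => Metric.infDist z S) x) (v : En n) :
    ∃ y ∈ projSet S x, ⟪‖x - y‖⁻¹ • (x - y), v⟫_ℝ ≤ ⟪p, v⟫_ℝ := by
  set t : ℕ → ℝ := fun k => ((k : ℝ) + 1)⁻¹ with ht
  have ht0 : ∀ k, 0 < t k := fun k => by positivity
  have htlim : Tendsto t atTop (𝓝 0) := by
    simpa [ht, one_div] using tendsto_one_div_add_atTop_nhds_zero_nat (𝕜 := ℝ)
  choose Y hY using fun k => aux_exists_proj S hS hSc (x + t k • v)
  have hzs : Tendsto (fun k => x + t k • v) atTop (𝓝 x) := by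
    have h1 : Tendsto (fun k => t k • v) atTop (𝓝 ((0:ℝ) • v)) := htlim.smul_const v
    rw [zero_smul] at h1
    simpa using tendsto_const_nhds.add h1
  obtain ⟨y, hyproj, φ, hφ, hYφ⟩ := aux_cluster hS hSc hzs hY
  have hxy : x ≠ y := fun h => hx (h ▸ hyproj.1)
  refine ⟨y, hyproj, ?_⟩
  have hxy0 : x - y ≠ 0 := sub_ne_zero.mpr hxy
  have hsub : Tendsto (fun k => x - Y (φ k)) atTop (𝓝 (x - y)) := tendsto_const_nhds.sub hYφ
  have hw : Tendsto (fun k => ‖x - Y (φ k)‖⁻¹ • (x - Y (φ k))) atTop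
      (𝓝 (‖x - y‖⁻¹ • (x - y))) :=
    (hsub.norm.inv₀ (norm_ne_zero_iff.mpr hxy0)).smul hsub
  have hinner : Tendsto (fun k => ⟪‖x - Y (φ k)‖⁻¹ • (x - Y (φ k)), v⟫_ℝ) atTop
      (𝓝 ⟪‖x - y‖⁻¹ • (x - y), v⟫_ℝ) := hw.inner tendsto_const_nhds
  refine le_of_forall_pos_le_add fun ε hε => ?_
  set ε' : ℝ := ε / (‖v‖ + 1) with hε'def
  have hε' : 0 < ε' := by positivity
  have hev : ∀ᶠ k in atTop, Metric.infDist (x + t k • v) S - Metric.infDist x S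
      - t k * ⟪p, v⟫_ℝ ≤ ε' * (t k * ‖v‖) := by
    have h1 := hzs.eventually (hp ε' hε')
    filter_upwards [h1] with k hk
    have e1 : x + t k • v - x = t k • v := by abel
    rw [e1, real_inner_smul_right, norm_smul, Real.norm_eq_abs, abs_of_pos (ht0 k)] at hk
    exact hk
  have hkey : ∀ᶠ k in atTop,
      ⟪‖x - Y (φ k)‖⁻¹ • (x - Y (φ k)), v⟫_ℝ ≤ ⟪p, v⟫_ℝ + ε := by
    have hevφ : ∀ᶠ k in atTop, Metric.infDist (x + t (φ k) • v) S - Metric.infDist x S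
        - t (φ k) * ⟪p, v⟫_ℝ ≤ ε' * (t (φ k) * ‖v‖) := hφ.tendsto_atTop.eventually hev
    filter_upwards [hevφ] with k hk
    have hYne : x ≠ Y (φ k) := fun h => hx (h ▸ (hY (φ k)).1)
    have hlow := aux_lower (hY (φ k)) hYne
    rw [real_inner_smul_right] at hlow
    have htpos := ht0 (φ k)
    have hdiv : ⟪‖x - Y (φ k)‖⁻¹ • (x - Y (φ k)), v⟫_ℝ ≤ ⟪p, v⟫_ℝ + ε' * ‖v‖ := by
      have := hlow
      nlinarith [hk, hlow]
    have hle : ε' * ‖v‖ ≤ ε := by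
      rw [hε'def, div_mul_eq_mul_div, div_le_iff₀ (by positivity : (0:ℝ) < ‖v‖ + 1)]
      nlinarith [norm_nonneg v, hε.le]
    linarith
  exact le_of_tendsto hinner hkey

lemma aux_sum_pad {M : Type*} [AddCommMonoid M] {c m : ℕ} (hc : c ≤ m) (g : Fin c → M) :
    ∑ i : Fin m, (if h : (i : ℕ) < c then g ⟨i, h⟩ else 0) = ∑ j : Fin c, g j := by
  calc ∑ i : Fin m, (if h : (i : ℕ) < c then g ⟨i, h⟩ else 0)
      = ∑ k ∈ Finset.range m, (if h : k < c then g ⟨k, h⟩ else 0) :=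
        Fin.sum_univ_eq_sum_range (fun k => if h : k < c then g ⟨k, h⟩ else 0) m
    _ = ∑ k ∈ Finset.range c, (if h : k < c then g ⟨k, h⟩ else 0) :=
        (Finset.sum_subset (Finset.range_subset_range.mpr hc)
          (fun k _ hk => dif_neg (by simpa using hk))).symm
    _ = ∑ j : Fin c, (if h : ((j : ℕ)) < c then g ⟨(j : ℕ), h⟩ else 0) :=
        (Fin.sum_univ_eq_sum_range (fun k => if h : k < c then g ⟨k, h⟩ else 0) c).symm
    _ = ∑ j : Fin c, g j := by
        apply Finset.sum_congr rfl
        intro j _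
        rw [dif_pos j.isLt]

lemma aux_isCompact_convexHull {s : Set (En n)} (hs : IsCompact s) :
    IsCompact (convexHull ℝ s) := by
  rcases s.eq_empty_or_nonempty with rfl | ⟨y₀, hy₀⟩
  · simp
  set m := n + 1 with hm
  set A : Set ((Fin m → ℝ) × (Fin m → En n)) :=
    (stdSimplex ℝ (Fin m)) ×ˢ (Set.pi Set.univ fun _ => s) with hA
  have hAc : IsCompact A := (isCompact_stdSimplex (𝕜 := ℝ) (ι := Fin m)).prod (isCompact_univ_pi fun _ => hs)
  have hcont : Continuous fun q : (Fin m → ℝ) × (Fin m → En n) => ∑ i : Fin m, q.1 i • q.2 i :=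
    continuous_finset_sum _ fun i _ =>
      ((continuous_apply i).comp continuous_fst).smul ((continuous_apply i).comp continuous_snd)
  have himg : (fun q : (Fin m → ℝ) × (Fin m → En n) => ∑ i : Fin m, q.1 i • q.2 i) '' A
      = convexHull ℝ s := by
    apply Subset.antisymm
    · rintro _ ⟨⟨w, Z⟩, ⟨hw, hZ⟩, rfl⟩
      exact mem_convexHull_of_exists_fintype w Z (fun i => hw.1 i) hw.2
        (fun i => hZ i (mem_univ i)) rfl
    · intro q hq
      rw [convexHull_eq_union] at hq
      simp only [mem_iUnion] at hq
      obtain ⟨T, hTs, hTai, hqT⟩ := hq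
      have hcard : T.card ≤ m := by
        have h1 := hTai.card_le_finrank_succ
        have h2 : Fintype.card T = T.card := Fintype.card_coe T
        have h3 : Module.finrank ℝ (vectorSpan ℝ (Set.range ((↑) : T → En n))) ≤ n := by
          have := Submodule.finrank_le (vectorSpan ℝ (Set.range ((↑) : T → En n)))
          simpa [finrank_euclideanSpace] using this
        omega
      rw [Finset.convexHull_eq] at hqT
      obtain ⟨w, hw0, hw1, hwq⟩ := hqT
      rw [Finset.centerMass_eq_of_sum_1 _ _ hw1] at hwq
      set c := T.card with hc
      set e := T.equivFin with he
      set W : Fin m → ℝ := fun i => if h : (i : ℕ) < c then w ((e.symm ⟨i, h⟩ : T) : En n) else 0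
        with hW
      set Z : Fin m → En n := fun i => if h : (i : ℕ) < c then ((e.symm ⟨i, h⟩ : T) : En n) else y₀
        with hZ
      have hsum1 : ∑ i : Fin m, W i = 1 := by
        rw [hW]
        rw [aux_sum_pad hcard (fun j => w ((e.symm j : T) : En n))]
        rw [Equiv.sum_comp e.symm (fun a : T => w (a : En n))]
        rw [Finset.sum_coe_sort T (fun y => w y)]
        exact hw1
      have hsumx : ∑ i : Fin m, W i • Z i = q := by
        have hptw : ∀ i : Fin m, W i • Z i
            = (if h : (i : ℕ) < c then w ((e.symm ⟨i, h⟩ : T) : En n) • ((e.symm ⟨i, h⟩ : T) : En n) else 0) := by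
          intro i
          simp only [hW, hZ]
          by_cases h : (i : ℕ) < c
          · rw [dif_pos h, dif_pos h, dif_pos h]
          · rw [dif_neg h, dif_neg h, dif_neg h, zero_smul]
        rw [Finset.sum_congr rfl (fun i _ => hptw i)]
        rw [aux_sum_pad hcard (fun j => w ((e.symm j : T) : En n) • ((e.symm j : T) : En n))]
        rw [Equiv.sum_comp e.symm (fun a : T => w (a : En n) • (a : En n))]
        rw [Finset.sum_coe_sort T (fun y => w y • y)]
        rw [← hwq]
        apply Finset.sum_congr rfl
        intro y hy
        simp
      refine ⟨(W, Z), ⟨⟨fun i => ?_, hsum1⟩, fun i _ => ?_⟩, hsumx⟩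
      · simp only [hW]
        by_cases h : (i : ℕ) < c
        · rw [dif_pos h]; exact hw0 _ (by exact_mod_cast (e.symm ⟨i, h⟩).2)
        · rw [dif_neg h]
      · simp only [hZ]
        by_cases h : (i : ℕ) < c
        · rw [dif_pos h]; exact hTs (by exact_mod_cast (e.symm ⟨i, h⟩).2)
        · rw [dif_neg h]; exact hy₀
  rw [← himg]
  exact hAc.image hcont

lemma aux_diff_unique {S : Set (En n)} (hS : S.Nonempty) (hSc : IsClosed S) {z y : En n}
    (hz : z ∉ S) (hy : y ∈ projSet S z) (huniq : ∀ w ∈ projSet S z, w = y) :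
    HasGradientAt (fun w => Metric.infDist w S) (‖z - y‖⁻¹ • (z - y)) z := by
  set p := ‖z - y‖⁻¹ • (z - y) with hp
  have hzy : z ≠ y := fun h => hz (h ▸ hy.1)
  have ha : z - y ≠ 0 := sub_ne_zero.mpr hzy
  have hnorm : ‖z - y‖ = Metric.infDist z S := aux_proj_norm hy
  have hdpos : 0 < ‖z - y‖ := norm_pos_iff.mpr ha
  -- projection stability
  have hstab : ∀ ε > 0, ∀ᶠ h in 𝓝 (0 : En n), ∀ w ∈ projSet S (z + h), dist w y < ε := by
    intro ε hε
    by_contra hcon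
    rw [Filter.not_eventually] at hcon
    have hseq : ∀ k : ℕ, ∃ h : En n, ‖h‖ < ((k : ℝ) + 1)⁻¹ ∧
        ∃ w ∈ projSet S (z + h), ¬ dist w y < ε := by
      intro k
      have hball : Metric.ball (0 : En n) (((k : ℝ) + 1)⁻¹) ∈ 𝓝 (0 : En n) :=
        Metric.ball_mem_nhds _ (by positivity)
      obtain ⟨h, hP, hh⟩ := (hcon.and_eventually (eventually_of_mem hball
        (fun x hx => hx))).exists
      push_neg at hP
      obtain ⟨w, hw1, hw2⟩ := hP
      exact ⟨h, by simpa [mem_ball, dist_zero_right] using hh, w, hw1, by simpa using hw2⟩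
    choose hs hhs hws using hseq
    choose W hW1 hW2 using hws
    have hzs : Tendsto (fun k => z + hs k) atTop (𝓝 z) := by
      rw [tendsto_iff_dist_tendsto_zero]
      have hub : ∀ k : ℕ, dist (z + hs k) z ≤ ((k : ℝ) + 1)⁻¹ := fun k => by
        rw [dist_eq_norm, add_sub_cancel_left]
        exact (hhs k).le
      have hlim : Tendsto (fun k : ℕ => ((k : ℝ) + 1)⁻¹) atTop (𝓝 0) := by
        simpa [one_div] using tendsto_one_div_add_atTop_nhds_zero_nat (𝕜 := ℝ)
      exact squeeze_zero (fun k => dist_nonneg) hub hlim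
    obtain ⟨y', hy'proj, φ, hφ, hYφ⟩ := aux_cluster hS hSc hzs hW1
    have hyy : y' = y := huniq y' hy'proj
    subst hyy
    have hdist : Tendsto (fun k => dist (W (φ k)) y') atTop (𝓝 (dist y' y')) :=
      hYφ.dist tendsto_const_nhds
    rw [dist_self] at hdist
    have hge : ∀ k, ε ≤ dist (W (φ k)) y' := fun k => not_lt.mp (hW2 (φ k))
    have hfin := ge_of_tendsto hdist (Eventually.of_forall hge)
    linarith
  rw [hasGradientAt_iff_hasFDerivAt, hasFDerivAt_iff_isLittleO_nhds_zero,
    Asymptotics.isLittleO_iff]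
  intro c hc
  have hGcont : ContinuousAt (fun w : En n => ‖z - w‖⁻¹ • (z - w)) y := by
    have h1 : ContinuousAt (fun w : En n => z - w) y :=
      (continuous_const.sub continuous_id).continuousAt
    exact (h1.norm.inv₀ (norm_ne_zero_iff.mpr ha)).smul h1
  obtain ⟨δ₂, hδ₂, hδ₂'⟩ := Metric.continuousAt_iff.mp hGcont c hc
  filter_upwards [hstab δ₂ hδ₂,
    Metric.ball_mem_nhds (0 : En n) (show (0:ℝ) < 2 * c * ‖z - y‖ by positivity)] with h hh1 hh2
  obtain ⟨w, hw⟩ := aux_exists_proj S hS hSc (z + h)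
  have hwz : z ≠ w := fun hzw => hz (hzw ▸ hw.1)
  have hlow := aux_lower hw hwz
  have hGw : ‖(‖z - w‖⁻¹ • (z - w)) - p‖ < c := by
    have := hδ₂' (hh1 w hw)
    rw [dist_eq_norm] at this
    exact this
  have hip : -(c * ‖h‖) ≤ ⟪(‖z - w‖⁻¹ • (z - w)) - p, h⟫_ℝ := by
    have habs := abs_real_inner_le_norm ((‖z - w‖⁻¹ • (z - w)) - p) h
    have hb : ‖(‖z - w‖⁻¹ • (z - w)) - p‖ * ‖h‖ ≤ c * ‖h‖ :=
      mul_le_mul_of_nonneg_right hGw.le (norm_nonneg h)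
    have := abs_le.mp (habs.trans hb)
    linarith [this.1]
  have hsplit : ⟪‖z - w‖⁻¹ • (z - w), h⟫_ℝ = ⟪p, h⟫_ℝ + ⟪(‖z - w‖⁻¹ • (z - w)) - p, h⟫_ℝ := by
    rw [inner_sub_left]; ring
  have hlow2 : Metric.infDist z S + ⟪p, h⟫_ℝ - c * ‖h‖ ≤ Metric.infDist (z + h) S := by
    rw [hsplit] at hlow
    linarith
  have hup : Metric.infDist (z + h) S ≤ Metric.infDist z S + ⟪p, h⟫_ℝ + c * ‖h‖ := by
    have h1 : Metric.infDist (z + h) S ≤ ‖(z - y) + h‖ := by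
      rw [show (z - y) + h = z + h - y by abel, ← dist_eq_norm]
      exact Metric.infDist_le_dist_of_mem hy.1
    have h2 := aux_upper (z - y) h ha
    have h3 : ‖h‖ ^ 2 / (2 * ‖z - y‖) ≤ c * ‖h‖ := by
      rw [div_le_iff₀ (by positivity)]
      have h4 : ‖h‖ < 2 * c * ‖z - y‖ := by
        have := mem_ball_iff_norm.mp hh2
        simpa using this
      nlinarith [norm_nonneg h]
    rw [hp] at *
    linarith
  have htd : (InnerProductSpace.toDual ℝ (En n)) p h = ⟪p, h⟫_ℝ :=
    InnerProductSpace.toDual_apply_apply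
  simp only [htd]
  rw [Real.norm_eq_abs, abs_le]
  constructor <;> linarith

lemma aux_seg {S : Set (En n)} (hS : S.Nonempty) (hSc : IsClosed S) {x y : En n}
    (hx : x ∉ S) (hy : y ∈ projSet S x) {t : ℝ} (ht0 : 0 < t) (ht1 : t < 1) :
    HasGradientAt (fun w => Metric.infDist w S) (‖x - y‖⁻¹ • (x - y)) (x + t • (y - x)) := by
  set z := x + t • (y - x) with hzdef
  have hxy : x ≠ y := fun h => hx (h ▸ hy.1)
  have ha : x - y ≠ 0 := sub_ne_zero.mpr hxy
  set d0 := ‖x - y‖ with hd0def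
  have hd0 : 0 < d0 := norm_pos_iff.mpr ha
  have hd0x : d0 = Metric.infDist x S := aux_proj_norm hy
  have hzy : z - y = (1 - t) • (x - y) := by
    rw [hzdef]
    module
  have hxz : x - z = t • (x - y) := by
    rw [hzdef]
    module
  have hnzy : ‖z - y‖ = (1 - t) * d0 := by
    rw [hzy, norm_smul, Real.norm_eq_abs, abs_of_pos (by linarith)]
  have hnxz : ‖x - z‖ = t * d0 := by
    rw [hxz, norm_smul, Real.norm_eq_abs, abs_of_pos ht0]
  have hdz_le : Metric.infDist z S ≤ (1 - t) * d0 := by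
    rw [← hnzy, ← dist_eq_norm]
    exact Metric.infDist_le_dist_of_mem hy.1
  have hdz_ge : ∀ w ∈ S, (1 - t) * d0 ≤ dist z w := by
    intro w hw
    have h1 : Metric.infDist x S ≤ dist x w := Metric.infDist_le_dist_of_mem hw
    have h2 : dist x w ≤ dist x z + dist z w := dist_triangle _ _ _
    have h3 : dist x z = t * d0 := by rw [dist_eq_norm, hnxz]
    rw [← hd0x] at h1
    linarith
  have hdz_ge' : (1 - t) * d0 ≤ Metric.infDist z S := by
    rw [Metric.infDist_eq_iInf]
    haveI := hS.to_subtype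
    exact le_ciInf (fun w => hdz_ge w w.2)
  have hdz : Metric.infDist z S = (1 - t) * d0 := le_antisymm hdz_le hdz_ge'
  have hyz : y ∈ projSet S z := ⟨hy.1, by rw [dist_eq_norm, hnzy, hdz]⟩
  have hznotS : z ∉ S := by
    intro hzS
    have h0 : Metric.infDist z S = 0 := Metric.infDist_zero_of_mem hzS
    nlinarith [hdz]
  have huniq : ∀ w ∈ projSet S z, w = y := by
    intro w hw
    have hzw : ‖z - w‖ = (1 - t) * d0 := by rw [← dist_eq_norm, hw.2, hdz]
    have h1 : d0 ≤ ‖x - w‖ := by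
      rw [hd0x, ← dist_eq_norm]
      exact Metric.infDist_le_dist_of_mem hw.1
    have hxw : x - w = (x - z) + (z - w) := by abel
    have h2 : ‖x - w‖ ≤ ‖x - z‖ + ‖z - w‖ := by rw [hxw]; exact norm_add_le _ _
    have h2' : ‖x - w‖ = ‖x - z‖ + ‖z - w‖ := by
      apply le_antisymm h2
      rw [hnxz, hzw]
      linarith
    have hinner : ⟪x - z, z - w⟫_ℝ = ‖x - z‖ * ‖z - w‖ := by
      have hsq : ‖(x - z) + (z - w)‖ ^ 2 = (‖x - z‖ + ‖z - w‖) ^ 2 := by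
        rw [← hxw, h2']
      nlinarith [norm_add_sq_real (x - z) (z - w)]
    have hre := inner_eq_norm_mul_iff_real.mp hinner
    rw [hzw, hnxz, hxz] at hre
    -- hre : ((1 - t) * d0) • (t • (x - y)) = (t * d0) • (z - w)
    have hcancel : (t * d0) • ((1 - t) • (x - y)) = (t * d0) • (z - w) := by
      rw [← hre, smul_smul, smul_smul]
      ring_nf
    have hzw2 : z - w = (1 - t) • (x - y) :=
      (smul_right_injective (En n) (by positivity : t * d0 ≠ 0) hcancel).symm
    have hzwy : z - w = z - y := by rw [hzw2, ← hzy]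
    exact sub_right_injective hzwy
  have hmain := aux_diff_unique hS hSc hznotS hyz huniq
  have h1t : (1:ℝ) - t ≠ 0 := by linarith
  have hvec : ‖z - y‖⁻¹ • (z - y) = ‖x - y‖⁻¹ • (x - y) := by
    rw [hnzy, hzy, smul_smul, ← hd0def]
    congr 1
    field_simp
  rw [← hvec]
  exact hmain

lemma aux_grad_eq {S : Set (En n)} (hS : S.Nonempty) (hSc : IsClosed S) {z : En n} (hz : z ∉ S)
    (hd : DifferentiableAt ℝ (fun w => Metric.infDist w S) z) {y : En n}
    (hy : y ∈ projSet S z) :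
    gradient (fun w => Metric.infDist w S) z = ‖z - y‖⁻¹ • (z - y) := by
  set f : En n → ℝ := fun w => Metric.infDist w S with hf
  set g := gradient f z with hg
  have hgrad : HasGradientAt f g z := hd.hasGradientAt
  set u := ‖z - y‖⁻¹ • (z - y) with hu
  have hzy : z ≠ y := fun h => hz (h ▸ hy.1)
  have ha : z - y ≠ 0 := sub_ne_zero.mpr hzy
  have hdz : ‖z - y‖ = Metric.infDist z S := aux_proj_norm hy
  have hdpos : 0 < ‖z - y‖ := norm_pos_iff.mpr ha
  have hDpos : 0 < Metric.infDist z S := hdz ▸ hdpos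
  have hu1 : ‖u‖ = 1 := by
    rw [hu, norm_smul, norm_inv, norm_norm, inv_mul_cancel₀ hdpos.ne']
  have hzyu : z - y = ‖z - y‖ • u := by
    rw [hu, smul_smul, mul_inv_cancel₀ hdpos.ne', one_smul]
  have hcurve : ∀ s : ℝ, -Metric.infDist z S < s → s ≤ 0 →
      f (z + s • u) = Metric.infDist z S + s := by
    intro s hs1 hs2
    have hle : f (z + s • u) ≤ Metric.infDist z S + s := by
      have hv : z + s • u - y = (Metric.infDist z S + s) • u := by
        rw [add_smul, ← hdz, ← hzyu]
        abel
      have : dist (z + s • u) y = Metric.infDist z S + s := by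
        rw [dist_eq_norm, hv, norm_smul, hu1, mul_one, Real.norm_eq_abs,
          abs_of_nonneg (by linarith)]
      rw [hf] at *
      calc Metric.infDist (z + s • u) S ≤ dist (z + s • u) y :=
            Metric.infDist_le_dist_of_mem hy.1
        _ = Metric.infDist z S + s := this
    have hge : Metric.infDist z S + s ≤ f (z + s • u) := by
      have h1 : Metric.infDist z S ≤ Metric.infDist (z + s • u) S + dist z (z + s • u) :=
        Metric.infDist_le_infDist_add_dist
      have h2 : dist z (z + s • u) = -s := by
        rw [dist_eq_norm, show z - (z + s • u) = (-s) • u by rw [neg_smul]; abel, norm_smul, hu1,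
          mul_one, Real.norm_eq_abs, abs_of_nonneg (by linarith)]
      rw [hf]
      linarith
    linarith
  have hline : HasDerivAt (fun s : ℝ => z + s • u) u 0 := by
    simpa using ((hasDerivAt_id (0:ℝ)).smul_const u).const_add z
  have hcomp : HasDerivAt (fun s : ℝ => f (z + s • u)) (⟪g, u⟫_ℝ) 0 := by
    have h1 : HasFDerivAt f ((InnerProductSpace.toDual ℝ (En n)) g) z :=
      hasGradientAt_iff_hasFDerivAt.mp hgrad
    have h2 : HasFDerivAt f ((InnerProductSpace.toDual ℝ (En n)) g) ((fun s : ℝ => z + s • u) 0) := by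
      simpa using h1
    have := h2.comp_hasDerivAt 0 hline
    simp only [InnerProductSpace.toDual_apply_apply] at this
    exact this
  have hW1 : HasDerivWithinAt (fun s : ℝ => f (z + s • u)) (⟪g, u⟫_ℝ) (Iic 0) 0 :=
    hcomp.hasDerivWithinAt
  have hW2 : HasDerivWithinAt (fun s : ℝ => f (z + s • u)) 1 (Iic 0) 0 := by
    have hid : HasDerivWithinAt (fun s : ℝ => Metric.infDist z S + s) 1 (Iic (0:ℝ)) 0 :=
      ((hasDerivAt_id (0:ℝ)).const_add (Metric.infDist z S)).hasDerivWithinAt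
    apply hid.congr_of_eventuallyEq
    · have hmem : Ioi (-(Metric.infDist z S)) ∈ 𝓝[Iic (0:ℝ)] 0 :=
        nhdsWithin_le_nhds (Ioi_mem_nhds (by linarith))
      filter_upwards [hmem, self_mem_nhdsWithin] with s hs1 hs2
      exact hcurve s hs1 hs2
    · simpa using hcurve 0 (by linarith) le_rfl
  have huni : UniqueDiffWithinAt ℝ (Iic (0:ℝ)) 0 := uniqueDiffOn_Iic 0 0 (by simp)
  have heq : ⟪g, u⟫_ℝ = 1 := by
    have e1 := hW1.derivWithin huni
    have e2 := hW2.derivWithin huni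
    rw [← e1, ← e2]
  have hfd : ‖fderiv ℝ f z‖ ≤ 1 := by
    have := norm_fderiv_le_of_lipschitz (x₀ := z) ℝ (Metric.lipschitz_infDist_pt S)
    simpa using this
  have hgn : ‖g‖ ≤ 1 := by
    have hdef : g = (InnerProductSpace.toDual ℝ (En n)).symm (fderiv ℝ f z) := rfl
    rw [hdef, LinearIsometryEquiv.norm_map]
    exact hfd
  have hcs : ⟪g, u⟫_ℝ ≤ ‖g‖ * ‖u‖ := real_inner_le_norm g u
  have hg1 : ‖g‖ = 1 := le_antisymm hgn (by rw [hu1, mul_one] at hcs; linarith)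
  have hinner : ⟪g, u⟫_ℝ = ‖g‖ * ‖u‖ := by rw [heq, hg1, hu1, one_mul]
  have hfin := inner_eq_norm_mul_iff_real.mp hinner
  rw [hu1, hg1, one_smul, one_smul] at hfin
  exact hfin

end AuxProofs

/-- Characterization of the reachable gradients and the superdifferential
of the distance function at a singular point outside `S`. -/
theorem reachable_gradients_and_superdifferential_of_distance {n : ℕ} (S : Set (En n))
    (hS : S.Nonempty) (hSc : IsClosed S) (x : En n) (hx : x ∉ S)
    (hnd : ¬ DifferentiableAt ℝ (fun z => Metric.infDist z S) x) :
    reachGrad (fun z => Metric.infDist z S) x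
        = (fun y => ‖x - y‖⁻¹ • (x - y)) '' projSet S x ∧
      superDiff (fun z => Metric.infDist z S) x
        = convexHull ℝ (reachGrad (fun z => Metric.infDist z S) x) ∧
      superDiff (fun z => Metric.infDist z S) x
        = (fun y => (Metric.infDist x S)⁻¹ • (x - y)) '' convexHull ℝ (projSet S x) := by
  have hDpos : 0 < Metric.infDist x S := (hSc.notMem_iff_infDist_pos hS).mp hx
  have hpart1 : reachGrad (fun z => Metric.infDist z S) x
      = (fun y => ‖x - y‖⁻¹ • (x - y)) '' projSet S x := by
    apply Subset.antisymm
    · rintro p ⟨xs, hne, hdiff, htend, hgrad⟩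
      have hSc' : ∀ᶠ h in atTop, xs h ∉ S :=
        htend.eventually (eventually_of_mem (hSc.isOpen_compl.mem_nhds hx) fun z hz => hz)
      obtain ⟨N, hN⟩ := eventually_atTop.mp hSc'
      have hgradval : ∀ h : ℕ, ∃ y' ∈ projSet S (xs (h + N)),
          gradient (fun z => Metric.infDist z S) (xs (h + N))
            = ‖xs (h + N) - y'‖⁻¹ • (xs (h + N) - y') := by
        intro h
        obtain ⟨y', hy'⟩ := aux_exists_proj S hS hSc (xs (h + N))
        exact ⟨y', hy', aux_grad_eq hS hSc (hN (h + N) (Nat.le_add_left _ _)) (hdiff (h + N)) hy'⟩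
      set Y : ℕ → En n := fun h =>
        xs (h + N) - Metric.infDist (xs (h + N)) S •
          gradient (fun z => Metric.infDist z S) (xs (h + N)) with hYdef
      have hYproj : ∀ h, Y h ∈ projSet S (xs (h + N)) := by
        intro h
        obtain ⟨y', hy', hgeq⟩ := hgradval h
        have hne0 : ‖xs (h + N) - y'‖ ≠ 0 := by
          rw [aux_proj_norm hy']
          exact ((hSc.notMem_iff_infDist_pos hS).mp (hN (h + N) (Nat.le_add_left _ _))).ne'
        have hYy : Y h = y' := by
          rw [hYdef]
          simp only
          rw [hgeq, ← aux_proj_norm hy', smul_smul, mul_inv_cancel₀ hne0, one_smul]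
          abel
        rw [hYy]; exact hy'
      have hgrad_norm : ∀ h, ‖gradient (fun z => Metric.infDist z S) (xs (h + N))‖ = 1 := by
        intro h
        obtain ⟨y', hy', hgeq⟩ := hgradval h
        have hne0 : ‖xs (h + N) - y'‖ ≠ 0 := by
          rw [aux_proj_norm hy']
          exact ((hSc.notMem_iff_infDist_pos hS).mp (hN (h + N) (Nat.le_add_left _ _))).ne'
        rw [hgeq, norm_smul, norm_inv, norm_norm, inv_mul_cancel₀ hne0]
      have haddN : Tendsto (fun h : ℕ => h + N) atTop atTop := tendsto_add_atTop_nat N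
      have htendN : Tendsto (fun h => xs (h + N)) atTop (𝓝 x) := htend.comp haddN
      have hgradN : Tendsto (fun h => gradient (fun z => Metric.infDist z S) (xs (h + N)))
          atTop (𝓝 p) := hgrad.comp haddN
      have hdN : Tendsto (fun h => Metric.infDist (xs (h + N)) S) atTop
          (𝓝 (Metric.infDist x S)) := ((Metric.continuous_infDist_pt S).tendsto x).comp htendN
      have hYtend : Tendsto Y atTop (𝓝 (x - Metric.infDist x S • p)) :=
        htendN.sub (hdN.smul hgradN)
      set y₀ := x - Metric.infDist x S • p with hy₀def
      have hy₀S : y₀ ∈ S := hSc.mem_of_tendsto hYtend (Eventually.of_forall fun h => (hYproj h).1)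
      have hp1 : ‖p‖ = 1 := by
        have h1 : Tendsto (fun h => ‖gradient (fun z => Metric.infDist z S) (xs (h + N))‖)
            atTop (𝓝 ‖p‖) := hgradN.norm
        rw [funext hgrad_norm] at h1
        exact tendsto_nhds_unique h1 tendsto_const_nhds
      have hxy₀ : x - y₀ = Metric.infDist x S • p := by rw [hy₀def]; abel
      have hny₀ : ‖x - y₀‖ = Metric.infDist x S := by
        rw [hxy₀, norm_smul, hp1, Real.norm_eq_abs, abs_of_pos hDpos, mul_one]
      refine ⟨y₀, ⟨hy₀S, by rw [dist_eq_norm, hny₀]⟩, ?_⟩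
      simp only
      rw [hny₀, hxy₀, smul_smul, inv_mul_cancel₀ hDpos.ne', one_smul]
    · rintro _ ⟨y, hy, rfl⟩
      have hxyne : x ≠ y := fun h => hx (h ▸ hy.1)
      have hyx0 : y - x ≠ 0 := sub_ne_zero.mpr (Ne.symm hxyne)
      have hgradh : ∀ h : ℕ, HasGradientAt (fun z => Metric.infDist z S)
          (‖x - y‖⁻¹ • (x - y)) (x + ((h : ℝ) + 2)⁻¹ • (y - x)) := by
        intro h
        have h2 : (1:ℝ) < (h : ℝ) + 2 := by
          have : (0:ℝ) ≤ (h : ℝ) := Nat.cast_nonneg h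
          linarith
        exact aux_seg hS hSc hx hy (by positivity) (inv_lt_one_of_one_lt₀ h2)
      refine ⟨fun h => x + ((h : ℝ) + 2)⁻¹ • (y - x), ?_,
        fun h => (hgradh h).differentiableAt, ?_, ?_⟩
      · intro h heq
        have h0 : ((h : ℝ) + 2)⁻¹ • (y - x) = 0 := by
          have := add_eq_left.mp heq
          exact this
        rcases smul_eq_zero.mp h0 with h1 | h1
        · have hne' : ((h : ℝ) + 2)⁻¹ ≠ 0 := by positivity
          exact hne' h1
        · exact hyx0 h1
      · have hc : Tendsto (fun h : ℕ => ((h : ℝ) + 2)⁻¹) atTop (𝓝 0) := by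
          apply Filter.Tendsto.inv_tendsto_atTop
          exact tendsto_atTop_add_const_right _ 2 tendsto_natCast_atTop_atTop
        have h1 : Tendsto (fun h : ℕ => ((h : ℝ) + 2)⁻¹ • (y - x)) atTop
            (𝓝 ((0:ℝ) • (y - x))) := hc.smul_const (y - x)
        rw [zero_smul] at h1
        simpa using tendsto_const_nhds.add h1
      · have hconst : (fun h : ℕ => gradient (fun z => Metric.infDist z S)
            (x + ((h : ℝ) + 2)⁻¹ • (y - x))) = fun _ => ‖x - y‖⁻¹ • (x - y) :=
          funext fun h => (hgradh h).gradient
        rw [hconst]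
        exact tendsto_const_nhds
  have hKcomp : IsCompact (projSet S x) := by
    have hclosed : IsClosed (projSet S x) := by
      have hps : projSet S x = S ∩ {y | dist x y = Metric.infDist x S} := rfl
      rw [hps]
      exact hSc.inter (isClosed_eq (continuous_const.dist continuous_id) continuous_const)
    have hbdd : Bornology.IsBounded (projSet S x) := by
      apply (Metric.isBounded_closedBall (x := x) (r := Metric.infDist x S)).subset
      intro y hy
      rw [Metric.mem_closedBall, dist_comm]
      exact hy.2.le
    exact Metric.isCompact_of_isClosed_isBounded hclosed hbdd
  have hC0comp : IsCompact ((fun y => ‖x - y‖⁻¹ • (x - y)) '' projSet S x) := by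
    apply hKcomp.image_of_continuousOn
    intro y hy
    have hxyne : x - y ≠ 0 := sub_ne_zero.mpr (fun h => hx (h ▸ hy.1))
    have h1 : ContinuousAt (fun w : En n => x - w) y :=
      (continuous_const.sub continuous_id).continuousAt
    exact ((h1.norm.inv₀ (norm_ne_zero_iff.mpr hxyne)).smul h1).continuousWithinAt
  have hhull := aux_isCompact_convexHull hC0comp
  have hpart2 : superDiff (fun z => Metric.infDist z S) x
      = convexHull ℝ ((fun y => ‖x - y‖⁻¹ • (x - y)) '' projSet S x) := by
    apply Subset.antisymm
    · intro p hp
      by_contra hcon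
      obtain ⟨f, u, hfp, hfb⟩ := geometric_hahn_banach_point_closed
        (convex_convexHull ℝ _) hhull.isClosed hcon
      obtain ⟨y, hy, hqv⟩ := aux_claimA hS hSc hx hp ((InnerProductSpace.toDual ℝ (En n)).symm f)
      have hq : ‖x - y‖⁻¹ • (x - y)
          ∈ convexHull ℝ ((fun y => ‖x - y‖⁻¹ • (x - y)) '' projSet S x) :=
        subset_convexHull ℝ _ ⟨y, hy, rfl⟩
      have h1 : u < f (‖x - y‖⁻¹ • (x - y)) := hfb _ hq
      have h2 : ∀ b : En n, ⟪b, (InnerProductSpace.toDual ℝ (En n)).symm f⟫_ℝ = f b := by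
        intro b
        rw [real_inner_comm]
        exact InnerProductSpace.toDual_symm_apply
      rw [h2, h2] at hqv
      linarith
    · exact convexHull_min (by rintro q ⟨y, hy, rfl⟩; exact aux_mem_superDiff hx hy)
        (aux_superDiff_convex _ _)
  set T : En n →ᵃ[ℝ] En n :=
    { toFun := fun y => (Metric.infDist x S)⁻¹ • (x - y)
      linear := -((Metric.infDist x S)⁻¹ • (LinearMap.id : En n →ₗ[ℝ] En n))
      map_vadd' := by
        intro q v
        simp only [vadd_eq_add, LinearMap.neg_apply, LinearMap.smul_apply, LinearMap.id_coe, id_eq]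
        module } with hT
  have himg : T '' convexHull ℝ (projSet S x) = convexHull ℝ (T '' projSet S x) :=
    T.image_convexHull _
  have hTK : T '' projSet S x = (fun y => ‖x - y‖⁻¹ • (x - y)) '' projSet S x := by
    apply image_congr
    intro y hy
    show (Metric.infDist x S)⁻¹ • (x - y) = ‖x - y‖⁻¹ • (x - y)
    rw [aux_proj_norm hy]
  have hpart3 : superDiff (fun z => Metric.infDist z S) x
      = (fun y => (Metric.infDist x S)⁻¹ • (x - y)) '' convexHull ℝ (projSet S x) := by
    have hsame : (fun y => (Metric.infDist x S)⁻¹ • (x - y)) '' convexHull ℝ (projSet S x)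
        = T '' convexHull ℝ (projSet S x) := rfl
    rw [hsame, himg, hTK]
    exact hpart2
  exact ⟨hpart1, by rw [hpart1]; exact hpart2, hpart3⟩
end
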